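/- Let a ∈ Δ_n^*, b ∈ Δ_m^*, C ∈ ℝ^{n×m}, ε ≥ 0, r ≥ 1, 0 < α ≤ 1/r and N ≥ 1. Set L_{ε,α} := sqrt( 3( 2‖C‖₂²/α⁴ + ((ε + 2‖C‖₂)/α³)² ) ) with ‖C‖₂ the spectral norm, and γ := 1/(2 L_{ε,α}). Let (Q₀,R₀,g₀) ∈ C(a,b,r,α) have strictly positive entries and define the mirror-descent iterates ξ_{k+1} := G_{ε,α}(ξ_k, γ) for k ≥ 0, starting from ξ₀ := (Q₀,R₀,g₀) (the iterates remain entrywise strictly positive, so the recursion is well defined). Then min_{0 ≤ k ≤ N−1} Δ_{ε,α}(ξ_k, γ) ≤ 4 L_{ε,α} D₀ / N, where D₀ := F_ε(Q₀,R₀,g₀) − LOT_{r,ε,α}. -/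

import Mathlib

open Matrix Finset Real
open scoped RealInnerProductSpace

noncomputable section

/-- Real matrices indexed by `Fin n × Fin m`. -/
abbrev Mat (n m : ℕ) : Type := Matrix (Fin n) (Fin m) ℝ

/-- Triples `(Q, R, g)` as in the low-rank OT factorization. -/
abbrev LRTriple (n m r : ℕ) : Type := Mat n r × Mat m r × (Fin r → ℝ)

/-- Pairs `(Q, R)` (fixed middle marginal `g`). -/
abbrev LRPair (n m r : ℕ) : Type := Mat n r × Mat m r

/-- The interior of the probability simplex Δ_n^*: strictly positive entries summing to 1. -/
def posSimplex (n : ℕ) : Set (Fin n → ℝ) := {a | (∀ i, 0 < a i) ∧ ∑ i, a i = 1}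

/-- Frobenius inner product ⟨C, P⟩ = Σ_{ij} C_ij P_ij. -/
def frobInner {n m : ℕ} (C P : Mat n m) : ℝ := ∑ i, ∑ j, C i j * P i j

/-- Entropy H(P) = −Σ_{ij} P_ij (log P_ij − 1) (with 0 log 0 = 0, as `Real.log 0 = 0`). -/
def matH {n m : ℕ} (P : Mat n m) : ℝ := -∑ i, ∑ j, P i j * (Real.log (P i j) - 1)

/-- Entropy of a vector. -/
def vecH {r : ℕ} (g : Fin r → ℝ) : ℝ := -∑ i, g i * (Real.log (g i) - 1)

/-- Kullback–Leibler divergence KL(P,Q) = Σ_{ij} P_ij (log(P_ij/Q_ij) − 1). -/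
def matKL {n m : ℕ} (P Q : Mat n m) : ℝ := ∑ i, ∑ j, P i j * (Real.log (P i j / Q i j) - 1)

/-- Kullback–Leibler divergence of vectors. -/
def vecKL {r : ℕ} (p q : Fin r → ℝ) : ℝ := ∑ i, p i * (Real.log (p i / q i) - 1)

/-- KL divergence on triples, summing over the three components. -/
def tripleKL {n m r : ℕ} (x y : LRTriple n m r) : ℝ :=
  matKL x.1 y.1 + matKL x.2.1 y.2.1 + vecKL x.2.2 y.2.2

/-- KL divergence on pairs, summing over the two components. -/
def pairKL {n m r : ℕ} (x y : LRPair n m r) : ℝ := matKL x.1 y.1 + matKL x.2 y.2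

/-- Euclidean inner product on triples. -/
def tripleInner {n m r : ℕ} (x y : LRTriple n m r) : ℝ :=
  frobInner x.1 y.1 + frobInner x.2.1 y.2.1 + ∑ i, x.2.2 i * y.2.2 i

/-- Euclidean inner product on pairs. -/
def pairInner {n m r : ℕ} (x y : LRPair n m r) : ℝ := frobInner x.1 y.1 + frobInner x.2 y.2

/-- Squared Euclidean norm of a triple (Frobenius on matrix blocks). -/
def tripleNormSq {n m r : ℕ} (x : LRTriple n m r) : ℝ :=
  (∑ i, ∑ j, (x.1 i j) ^ 2) + (∑ i, ∑ j, (x.2.1 i j) ^ 2) + ∑ i, (x.2.2 i) ^ 2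

/-- Squared Euclidean norm of a pair (Frobenius on matrix blocks). -/
def pairNormSq {n m r : ℕ} (x : LRPair n m r) : ℝ :=
  (∑ i, ∑ j, (x.1 i j) ^ 2) + (∑ i, ∑ j, (x.2 i j) ^ 2)

/-- The transport polytope Π_{a,b} of couplings with marginals `a` and `b`. -/
def couplings {n m : ℕ} (a : Fin n → ℝ) (b : Fin m → ℝ) : Set (Mat n m) :=
  {P | (∀ i j, 0 ≤ P i j) ∧ (∀ i, ∑ j, P i j = a i) ∧ (∀ j, ∑ i, P i j = b j)}

/-- The nonnegative rank: smallest `q` such that `M` is a sum of `q` nonnegative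
rank-one matrices. -/
def nonnegRank {n m : ℕ} (M : Mat n m) : ℕ :=
  sInf {q : ℕ | ∃ f : Fin q → Mat n m,
    (∀ i, (f i).rank = 1 ∧ ∀ k l, 0 ≤ f i k l) ∧ M = ∑ i, f i}

/-- Π_{a,b}(r): couplings with nonnegative rank at most `r`. -/
def couplingsRank {n m : ℕ} (a : Fin n → ℝ) (b : Fin m → ℝ) (r : ℕ) : Set (Mat n m) :=
  {P | P ∈ couplings a b ∧ nonnegRank P ≤ r}

/-- 𝒞₁(a,b,r): `Q, R` nonnegative with row sums `a`, `b`, and `g > 0`. -/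
def C1set {n m : ℕ} (a : Fin n → ℝ) (b : Fin m → ℝ) (r : ℕ) : Set (LRTriple n m r) :=
  {x | (∀ i j, 0 ≤ x.1 i j) ∧ (∀ i j, 0 ≤ x.2.1 i j) ∧ (∀ i, 0 < x.2.2 i) ∧
    (∀ i, ∑ j, x.1 i j = a i) ∧ (∀ i, ∑ j, x.2.1 i j = b i)}

/-- The closure of 𝒞₁(a,b,r): as 𝒞₁ but only `g ≥ 0`. -/
def C1barSet {n m : ℕ} (a : Fin n → ℝ) (b : Fin m → ℝ) (r : ℕ) : Set (LRTriple n m r) :=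
  {x | (∀ i j, 0 ≤ x.1 i j) ∧ (∀ i j, 0 ≤ x.2.1 i j) ∧ (∀ i, 0 ≤ x.2.2 i) ∧
    (∀ i, ∑ j, x.1 i j = a i) ∧ (∀ i, ∑ j, x.2.1 i j = b i)}

/-- 𝒞₁(a,b,r,α): as 𝒞₁ but with the lower bound `g ≥ α`. -/
def C1setAlpha {n m : ℕ} (a : Fin n → ℝ) (b : Fin m → ℝ) (r : ℕ) (α : ℝ) :
    Set (LRTriple n m r) :=
  {x | (∀ i j, 0 ≤ x.1 i j) ∧ (∀ i j, 0 ≤ x.2.1 i j) ∧ (∀ i, α ≤ x.2.2 i) ∧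
    (∀ i, ∑ j, x.1 i j = a i) ∧ (∀ i, ∑ j, x.2.1 i j = b i)}

/-- 𝒞₂(r): `Q, R, g` nonnegative with both column sums equal to `g`. -/
def C2set {n m : ℕ} (r : ℕ) : Set (LRTriple n m r) :=
  {x | (∀ i j, 0 ≤ x.1 i j) ∧ (∀ i j, 0 ≤ x.2.1 i j) ∧ (∀ i, 0 ≤ x.2.2 i) ∧
    (∀ j, ∑ i, x.1 i j = x.2.2 j) ∧ (∀ j, ∑ i, x.2.1 i j = x.2.2 j)}

/-- 𝒞(a,b,r) = 𝒞₁(a,b,r) ∩ 𝒞₂(r). -/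
def Cset {n m : ℕ} (a : Fin n → ℝ) (b : Fin m → ℝ) (r : ℕ) : Set (LRTriple n m r) :=
  C1set a b r ∩ C2set r

/-- 𝒞(a,b,r,α) = 𝒞₁(a,b,r,α) ∩ 𝒞₂(r). -/
def CsetAlpha {n m : ℕ} (a : Fin n → ℝ) (b : Fin m → ℝ) (r : ℕ) (α : ℝ) :
    Set (LRTriple n m r) :=
  C1setAlpha a b r α ∩ C2set r

/-- F_ε(Q,R,g) = ⟨C, Q Diag(1/g) Rᵀ⟩ − ε H((Q,R,g)). -/
def Fobj {n m r : ℕ} (C : Mat n m) (ε : ℝ) (x : LRTriple n m r) : ℝ :=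
  frobInner C (x.1 * Matrix.diagonal (fun i => (x.2.2 i)⁻¹) * x.2.1ᵀ) -
    ε * (matH x.1 + matH x.2.1 + vecH x.2.2)

/-- LOT_{r,ε} = inf of F_ε over 𝒞(a,b,r). -/
def LOTre {n m : ℕ} (a : Fin n → ℝ) (b : Fin m → ℝ) (C : Mat n m) (ε : ℝ) (r : ℕ) : ℝ :=
  sInf (Fobj C ε '' Cset a b r)

/-- LOT_{r,ε,α} = inf of F_ε over 𝒞(a,b,r,α). -/
def LOTreAlpha {n m : ℕ} (a : Fin n → ℝ) (b : Fin m → ℝ) (C : Mat n m) (ε : ℝ) (r : ℕ)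
    (α : ℝ) : ℝ :=
  sInf (Fobj C ε '' CsetAlpha a b r α)

/-- Spectral norm (ℓ²→ℓ² operator norm) of a matrix. -/
def specNorm {n m : ℕ} (C : Mat n m) : ℝ :=
  ‖LinearMap.toContinuousLinearMap (Matrix.toEuclideanLin C)‖

/-- The gradient ∇F_ε(Q,R,g) =
(C R Diag(1/g) + ε log Q, Cᵀ Q Diag(1/g) + ε log R, −𝒟(Qᵀ C R)/g² + ε log g). -/
def gradF {n m r : ℕ} (C : Mat n m) (ε : ℝ) (x : LRTriple n m r) : LRTriple n m r :=
  (Matrix.of fun i k => (C * x.2.1) i k * (x.2.2 k)⁻¹ + ε * Real.log (x.1 i k),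
   Matrix.of fun j k => (Cᵀ * x.1) j k * (x.2.2 k)⁻¹ + ε * Real.log (x.2.1 j k),
   fun k => -((x.1ᵀ * C * x.2.1) k k) / (x.2.2 k) ^ 2 + ε * Real.log (x.2.2 k))

/-- Entrywise logarithm of a triple. -/
def logTriple {n m r : ℕ} (x : LRTriple n m r) : LRTriple n m r :=
  (Matrix.of fun i k => Real.log (x.1 i k), Matrix.of fun j k => Real.log (x.2.1 j k),
   fun k => Real.log (x.2.2 k))

/-- The feasible set Π_{a,g} × Π_{b,g}. -/
def pairFeasible {n m r : ℕ} (a : Fin n → ℝ) (b : Fin m → ℝ) (g : Fin r → ℝ) :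
    Set (LRPair n m r) :=
  {u | u.1 ∈ couplings a g ∧ u.2 ∈ couplings b g}

/-- f_ε(Q,R) = ⟨C, Q Diag(1/g) Rᵀ⟩ − ε (H(Q) + H(R)) for fixed `g`. -/
def fobj {n m r : ℕ} (C : Mat n m) (g : Fin r → ℝ) (ε : ℝ) (x : LRPair n m r) : ℝ :=
  frobInner C (x.1 * Matrix.diagonal (fun i => (g i)⁻¹) * x.2ᵀ) - ε * (matH x.1 + matH x.2)

/-- LOT_{r,g,ε} = inf of f_ε over Π_{a,g} × Π_{b,g}. -/
def LOTfix {n m r : ℕ} (a : Fin n → ℝ) (b : Fin m → ℝ) (g : Fin r → ℝ) (C : Mat n m)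
    (ε : ℝ) : ℝ :=
  sInf (fobj C g ε '' pairFeasible a b g)

/-- The gradient ∇f_ε(Q,R) = (C R Diag(1/g) + ε log Q, Cᵀ Q Diag(1/g) + ε log R). -/
def gradf {n m r : ℕ} (C : Mat n m) (g : Fin r → ℝ) (ε : ℝ) (x : LRPair n m r) :
    LRPair n m r :=
  (Matrix.of fun i k => (C * x.2) i k * (g k)⁻¹ + ε * Real.log (x.1 i k),
   Matrix.of fun j k => (Cᵀ * x.1) j k * (g k)⁻¹ + ε * Real.log (x.2 j k))

/-- Entrywise logarithm of a pair. -/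
def logPair {n m r : ℕ} (x : LRPair n m r) : LRPair n m r :=
  (Matrix.of fun i k => Real.log (x.1 i k), Matrix.of fun j k => Real.log (x.2 j k))

end


noncomputable section MDAux
open Real Finset Matrix

/-- t - 1 ≤ t * log t for t ≥ 0 -/
lemma aux_mul_log_ge (t : ℝ) (ht : 0 ≤ t) : t - 1 ≤ t * Real.log t := by
  rcases eq_or_lt_of_le ht with h | h
  · simp [← h]
  · have h1 : Real.log t⁻¹ ≤ t⁻¹ - 1 := Real.log_le_sub_one_of_pos (by positivity)
    rw [Real.log_inv] at h1
    have h2 : 1 - t⁻¹ ≤ Real.log t := by linarith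
    have := mul_le_mul_of_nonneg_left h2 ht
    have ht' : t * (1 - t⁻¹) = t - 1 := by field_simp
    linarith [ht' ▸ this]

lemma aux_breg_nonneg {x y : ℝ} (hx : 0 < x) (hy : 0 < y) :
    0 ≤ y * Real.log (y / x) - y + x := by
  have h1 : Real.log (x / y) ≤ x / y - 1 := Real.log_le_sub_one_of_pos (by positivity)
  have h2 : Real.log (x / y) = -Real.log (y / x) := by
    rw [Real.log_div hx.ne' hy.ne', Real.log_div hy.ne' hx.ne']; ring
  rw [h2] at h1
  have h3 : y * (x / y - 1) = x - y := by field_simp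
  nlinarith [mul_le_mul_of_nonneg_left h1 hy.le]

/-- entrywise: KL(x,y)+KL(y,x) pointwise bound -/
lemma aux_klsum_le {x y : ℝ} (hx : 0 < x) (hy : 0 < y) :
    x * (Real.log (x / y) - 1) + y * (Real.log (y / x) - 1) ≤
      (x - y) * (Real.log x - Real.log y) := by
  rw [Real.log_div hx.ne' hy.ne', Real.log_div hy.ne' hx.ne']
  nlinarith [hx, hy]

/-- Ssym = Breg both ways, entrywise identity -/
lemma aux_ssym_eq {x y : ℝ} (hx : 0 < x) (hy : 0 < y) :
    (x - y) * (Real.log x - Real.log y) =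
      (y * Real.log (y / x) - y + x) + (x * Real.log (x / y) - x + y) := by
  rw [Real.log_div hx.ne' hy.ne', Real.log_div hy.ne' hx.ne']; ring

/-- quadratic lower bound for the Bregman divergence on (0,1] -/
lemma aux_breg_quad {x y : ℝ} (hx : 0 < x) (hx1 : x ≤ 1) (hy : 0 < y) (hy1 : y ≤ 1) :
    (y - x) ^ 2 / 2 ≤ y * Real.log (y / x) - y + x := by
  set f : ℝ → ℝ := fun t => t * Real.log t - t * Real.log x - t + x - (t - x) ^ 2 / 2 with hf
  have hfx : f x = 0 := by simp [hf]
  have hderiv : ∀ t : ℝ, 0 < t → HasDerivAt f (Real.log t - Real.log x - (t - x)) t := by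
    intro t ht
    have h1 : HasDerivAt (fun t : ℝ => t * Real.log t) (Real.log t + 1) t :=
      Real.hasDerivAt_mul_log ht.ne'
    have h2 : HasDerivAt (fun t : ℝ => t * Real.log x) (Real.log x) t := by
      simpa using (hasDerivAt_id t).mul_const (Real.log x)
    have h3 : HasDerivAt (fun t : ℝ => (t - x) ^ 2 / 2) (t - x) t := by
      have : HasDerivAt (fun t : ℝ => t - x) 1 t := (hasDerivAt_id t).sub_const x
      simpa using (this.pow 2).div_const 2
    have := ((h1.sub h2).sub (hasDerivAt_id t)).add_const x |>.sub h3
    exact this.congr_deriv (by ring)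
  rcases le_total x y with hxy | hxy
  · -- y ≥ x : f monotone on [x, y]
    have hmono : MonotoneOn f (Set.Icc x y) := by
      apply monotoneOn_of_deriv_nonneg (convex_Icc x y)
      · exact ContinuousOn.mono (fun t ht => (hderiv t (lt_of_lt_of_le hx ht.1)).continuousAt.continuousWithinAt) (fun t ht => ht)
      · intro t ht
        exact (hderiv t (lt_of_lt_of_le hx (interior_subset ht).1)).differentiableAt.differentiableWithinAt
      · intro t ht
        rw [interior_Icc] at ht
        rw [(hderiv t (hx.trans ht.1)).deriv]
        have ht0 : 0 < t := hx.trans ht.1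
        have ht1 : t ≤ 1 := le_of_lt (lt_of_lt_of_le ht.2 hy1)
        have h1 : Real.log (x / t) ≤ x / t - 1 := Real.log_le_sub_one_of_pos (by positivity)
        rw [Real.log_div hx.ne' ht0.ne'] at h1
        have h2 : Real.log t - Real.log x ≥ 1 - x / t := by linarith
        have h3 : 1 - x / t = (t - x) / t := by field_simp
        have h4 : t - x ≤ (t - x) / t := by
          rw [le_div_iff₀ ht0]
          nlinarith [sub_nonneg.mpr ht.1.le]
        linarith
    have := hmono (Set.left_mem_Icc.mpr hxy) (Set.right_mem_Icc.mpr hxy) hxy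
    rw [hfx] at this
    have hyx : y * Real.log (y / x) = y * Real.log y - y * Real.log x := by
      rw [Real.log_div hy.ne' hx.ne']; ring
    simp only [hf] at this; nlinarith [this]
  · -- y ≤ x : f antitone on [y, x]
    have hmono : AntitoneOn f (Set.Icc y x) := by
      apply antitoneOn_of_deriv_nonpos (convex_Icc y x)
      · exact ContinuousOn.mono (fun t ht => (hderiv t (lt_of_lt_of_le hy ht.1)).continuousAt.continuousWithinAt) (fun t ht => ht)
      · intro t ht
        exact (hderiv t (lt_of_lt_of_le hy (interior_subset ht).1)).differentiableAt.differentiableWithinAt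
      · intro t ht
        rw [interior_Icc] at ht
        rw [(hderiv t (hy.trans ht.1)).deriv]
        have ht0 : 0 < t := hy.trans ht.1
        have h1 : Real.log (t / x) ≤ t / x - 1 := Real.log_le_sub_one_of_pos (by positivity)
        rw [Real.log_div ht0.ne' hx.ne'] at h1
        have h4 : t / x - 1 = (t - x) / x := by field_simp
        have h5 : (t - x) / x ≤ t - x := by
          rw [div_le_iff₀ hx]
          nlinarith [sub_nonpos.mpr (le_of_lt ht.2)]
        linarith
    have := hmono (Set.left_mem_Icc.mpr hxy) (Set.right_mem_Icc.mpr hxy) hxy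
    rw [hfx] at this
    have hyx : y * Real.log (y / x) = y * Real.log y - y * Real.log x := by
      rw [Real.log_div hy.ne' hx.ne']; ring
    simp only [hf] at this; nlinarith [this]

lemma specNorm_nonneg {n m : ℕ} (C : Mat n m) : 0 ≤ specNorm C := norm_nonneg _

lemma aux_l2_le_l1 {k : ℕ} (w : Fin k → ℝ) (hw : ∀ i, 0 ≤ w i) :
    Real.sqrt (∑ i, w i ^ 2) ≤ ∑ i, w i := by
  have h1 : ∑ i, w i ^ 2 ≤ (∑ i, w i) ^ 2 := by
    have : ∀ i ∈ Finset.univ, w i ^ 2 ≤ w i * ∑ j, w j := by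
      intro i _
      have := Finset.single_le_sum (f := w) (fun j _ => hw j) (Finset.mem_univ i)
      nlinarith [hw i]
    calc ∑ i, w i ^ 2 ≤ ∑ i, w i * ∑ j, w j := Finset.sum_le_sum this
    _ = (∑ i, w i) ^ 2 := by rw [← Finset.sum_mul]; ring
  calc Real.sqrt (∑ i, w i ^ 2) ≤ Real.sqrt ((∑ i, w i) ^ 2) := Real.sqrt_le_sqrt h1
  _ = ∑ i, w i := Real.sqrt_sq (Finset.sum_nonneg fun i _ => hw i)

lemma aux_cs_bound {n m : ℕ} (C : Mat n m) (u : Fin n → ℝ) (v : Fin m → ℝ) :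
    |∑ i, ∑ j, u i * (C i j * v j)| ≤
      specNorm C * (Real.sqrt (∑ i, u i ^ 2) * Real.sqrt (∑ j, v j ^ 2)) := by
  set U : EuclideanSpace ℝ (Fin n) := (WithLp.equiv 2 (Fin n → ℝ)).symm u with hU
  set V : EuclideanSpace ℝ (Fin m) := (WithLp.equiv 2 (Fin m → ℝ)).symm v with hV
  have hip : (inner ℝ U (Matrix.toEuclideanLin C V) : ℝ) = ∑ i, ∑ j, u i * (C i j * v j) := by
    rw [Matrix.toEuclideanLin_apply, PiLp.inner_apply]
    apply Finset.sum_congr rfl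
    intro i _
    simp only [RCLike.inner_apply, conj_trivial, WithLp.equiv_symm_apply, WithLp.ofLp_toLp, hU, hV,
      Matrix.mulVec, dotProduct]
    rw [Finset.sum_mul]
    exact Finset.sum_congr rfl fun j _ => by ring
  have hcs : |(inner ℝ U (Matrix.toEuclideanLin C V) : ℝ)| ≤ ‖U‖ * ‖Matrix.toEuclideanLin C V‖ :=
    abs_real_inner_le_norm U _
  have hop : ‖Matrix.toEuclideanLin C V‖ ≤ specNorm C * ‖V‖ := by
    have := (LinearMap.toContinuousLinearMap (Matrix.toEuclideanLin C)).le_opNorm V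
    simpa [specNorm] using this
  have hnU : ‖U‖ = Real.sqrt (∑ i, u i ^ 2) := by
    rw [EuclideanSpace.norm_eq]
    congr 1
    apply Finset.sum_congr rfl
    intro i _
    rw [hU, WithLp.equiv_symm_apply, WithLp.ofLp_toLp, Real.norm_eq_abs, sq_abs]
  have hnV : ‖V‖ = Real.sqrt (∑ j, v j ^ 2) := by
    rw [EuclideanSpace.norm_eq]
    congr 1
    apply Finset.sum_congr rfl
    intro j _
    rw [hV, WithLp.equiv_symm_apply, WithLp.ofLp_toLp, Real.norm_eq_abs, sq_abs]
  rw [← hip]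
  calc |(inner ℝ U (Matrix.toEuclideanLin C V) : ℝ)| ≤ ‖U‖ * ‖Matrix.toEuclideanLin C V‖ := hcs
  _ ≤ ‖U‖ * (specNorm C * ‖V‖) := by
      apply mul_le_mul_of_nonneg_left hop (norm_nonneg _)
  _ = specNorm C * (‖U‖ * ‖V‖) := by ring
  _ = specNorm C * (Real.sqrt (∑ i, u i ^ 2) * Real.sqrt (∑ j, v j ^ 2)) := by
      rw [hnU, hnV]

/-- per-column remainder bound -/
lemma aux_perk (σ α A B1 B2 E g g' u v : ℝ) (hσ : 0 ≤ σ) (hα : 0 < α)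
    (hg : α ≤ g) (hg' : α ≤ g')
    (hA : |A| ≤ σ * (g * g)) (hB1 : |B1| ≤ σ * (u * g)) (hB2 : |B2| ≤ σ * (g * v))
    (hE : |E| ≤ σ * (u * v)) (hu : 0 ≤ u) (hv : 0 ≤ v) :
    (A + B1 + B2 + E) / g' - A / g - (B1 + B2) / g + A * (g' - g) / g ^ 2 ≤
      3 * σ / (2 * α) * (u ^ 2 + v ^ 2 + (g' - g) ^ 2) := by
  have hg0 : 0 < g := lt_of_lt_of_le hα hg
  have hg'0 : 0 < g' := lt_of_lt_of_le hα hg'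
  have hid : (A + B1 + B2 + E) / g' - A / g - (B1 + B2) / g + A * (g' - g) / g ^ 2 =
      A * (g' - g) ^ 2 / (g ^ 2 * g') + -((B1 + B2) * (g' - g)) / (g * g') + E / g' := by
    field_simp
    ring
  rw [hid]
  set w := |g' - g| with hw
  have hw0 : 0 ≤ w := abs_nonneg _
  have hww : w ^ 2 = (g' - g) ^ 2 := sq_abs _
  have hT1 : A * (g' - g) ^ 2 / (g ^ 2 * g') ≤ σ * (g * g) * (g' - g) ^ 2 / (g ^ 2 * α) := by
    gcongr
    all_goals first
      | exact le_trans hα.le (hxgα k)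
      | positivity
      | exact le_trans (le_abs_self A) hA
  have hT1' : σ * (g * g) * (g' - g) ^ 2 / (g ^ 2 * α) = σ / α * (g' - g) ^ 2 := by
    field_simp
  have hT2 : -((B1 + B2) * (g' - g)) / (g * g') ≤ (σ * (u * g) + σ * (g * v)) * w / (g * α) := by
    gcongr
    calc -((B1 + B2) * (g' - g)) ≤ |(B1 + B2) * (g' - g)| := neg_le_abs _
      _ = |B1 + B2| * w := by rw [abs_mul]
      _ ≤ (σ * (u * g) + σ * (g * v)) * w := by
          apply mul_le_mul_of_nonneg_right _ hw0
          exact le_trans (abs_add_le _ _) (add_le_add hB1 hB2)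
  have hT2' : (σ * (u * g) + σ * (g * v)) * w / (g * α) = σ / α * ((u + v) * w) := by
    field_simp
  have hT3 : E / g' ≤ σ * (u * v) / α := by
    gcongr
    exact le_trans (le_abs_self E) hE
  have hT3' : σ * (u * v) / α = σ / α * (u * v) := by ring
  rw [hT1', ← hww] at hT1
  rw [hT2'] at hT2
  rw [hT3'] at hT3
  have hsa : 0 ≤ σ / α := by positivity
  have hkey : σ / α * (w ^ 2 + (u + v) * w + u * v) ≤
      3 * σ / (2 * α) * (u ^ 2 + v ^ 2 + w ^ 2) := by
    have h2 : 2 * (w ^ 2 + (u + v) * w + u * v) ≤ 3 * (u ^ 2 + v ^ 2 + w ^ 2) := by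
      nlinarith [sq_nonneg (u + v - w), sq_nonneg (u - v)]
    have := mul_le_mul_of_nonneg_left h2 hsa
    calc σ / α * (w ^ 2 + (u + v) * w + u * v)
        = σ / α * (2 * (w ^ 2 + (u + v) * w + u * v)) / 2 := by ring
      _ ≤ σ / α * (3 * (u ^ 2 + v ^ 2 + w ^ 2)) / 2 := by linarith
      _ = 3 * σ / (2 * α) * (u ^ 2 + v ^ 2 + w ^ 2) := by
          field_simp
  rw [← hww]
  linarith [hT1, hT2, hT3, hkey]

/-- convexity-type upper bound for the prox kernel along the segment, with
penalty term when `ye = 0`. -/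
lemma aux_entry_convex (xe ye t : ℝ) (hx : 0 < xe) (hy : 0 ≤ ye) (ht : 0 < t) (ht1 : t ≤ 1) :
    (ye + t * (xe - ye)) * (Real.log ((ye + t * (xe - ye)) / xe) - 1) ≤
      ye * (Real.log (ye / xe) - 1) +
        t * (xe * (Real.log (xe / xe) - 1) - ye * (Real.log (ye / xe) - 1)) +
        t * Real.log t * (if ye = 0 then xe else 0) := by
  rcases eq_or_lt_of_le hy with h0 | hy0
  · -- ye = 0
    subst h0
    simp only [if_pos rfl, zero_mul, zero_add, zero_sub, sub_zero, mul_zero, neg_zero]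
    have h1 : t * xe / xe = t := by field_simp
    rw [h1]
    rw [if_pos trivial, div_self hx.ne', Real.log_one]
    ring_nf
    exact le_refl _

  · -- ye > 0 : convexity
    simp only [if_neg hy0.ne', mul_zero, add_zero]
    have hw : 0 < ye + t * (xe - ye) := by nlinarith
    have hrw : ∀ s : ℝ, 0 < s → s * (Real.log (s / xe) - 1) =
        s * Real.log s - s * (Real.log xe + 1) := by
      intro s hs
      rw [Real.log_div hs.ne' hx.ne']; ring
    rw [hrw _ hw, hrw _ hy0, hrw _ hx]
    have hconv := Real.convexOn_mul_log.2 (Set.mem_Ici.mpr hy0.le) (Set.mem_Ici.mpr hx.le)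
      (by linarith : (0:ℝ) ≤ 1 - t) ht.le (by ring)
    simp only [smul_eq_mul] at hconv
    have harg : (1 - t) * ye + t * xe = ye + t * (xe - ye) := by ring
    rw [harg] at hconv
    nlinarith [hconv]

/-- derivative at 0 of the per-entry prox objective along the segment -/
lemma aux_hasDeriv_entry (ce xe ye s : ℝ) (hx : 0 < xe) (hy : 0 < ye) :
    HasDerivAt (fun t : ℝ => ce * (ye + t * (xe - ye)) +
        s * ((ye + t * (xe - ye)) * (Real.log ((ye + t * (xe - ye)) / xe) - 1)))
      ((xe - ye) * ce + s * ((xe - ye) * (Real.log ye - Real.log xe))) 0 := by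
  set d := xe - ye with hd
  have hw : HasDerivAt (fun t : ℝ => ye + t * d) d 0 := by
    simpa using ((hasDerivAt_id (0:ℝ)).mul_const d).const_add ye
  have hw0 : (fun t : ℝ => ye + t * d) 0 = ye := by simp
  have hlog : HasDerivAt (fun t : ℝ => Real.log (ye + t * d)) (d / ye) 0 := by
    have := hw.log (by simpa [hw0] using hy.ne')
    simpa [hw0] using this
  have hmul : HasDerivAt (fun t : ℝ => (ye + t * d) * (Real.log (ye + t * d) - (Real.log xe + 1)))
      (d * (Real.log ye - (Real.log xe + 1)) + ye * (d / ye)) 0 := by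
    have := hw.mul (hlog.sub_const (Real.log xe + 1))
    exact this.congr_deriv (by simp)
  have hF : HasDerivAt (fun t : ℝ => ce * (ye + t * d) +
      s * ((ye + t * d) * (Real.log (ye + t * d) - (Real.log xe + 1))))
      (ce * d + s * (d * (Real.log ye - (Real.log xe + 1)) + ye * (d / ye))) 0 :=
    (hw.const_mul ce).add (hmul.const_mul s)
  have heq : (fun t : ℝ => ce * (ye + t * d) +
      s * ((ye + t * d) * (Real.log ((ye + t * d) / xe) - 1))) =ᶠ[nhds (0:ℝ)]
      (fun t : ℝ => ce * (ye + t * d) +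
      s * ((ye + t * d) * (Real.log (ye + t * d) - (Real.log xe + 1)))) := by
    have hcont : ContinuousAt (fun t : ℝ => ye + t * d) 0 := hw.continuousAt
    have hne : ∀ᶠ t in nhds (0:ℝ), ye + t * d ≠ 0 := by
      have := hcont.eventually_ne (by simpa [hw0] using hy.ne')
      simpa [hw0] using this
    filter_upwards [hne] with t ht
    rw [Real.log_div ht hx.ne']
    ring
  have := hF.congr_of_eventuallyEq heq
  exact this.congr_deriv (by field_simp; ring)

variable {n m r : ℕ}

/-- strict positivity of all entries of a triple -/
def PosT (x : LRTriple n m r) : Prop :=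
  (∀ i k, 0 < x.1 i k) ∧ (∀ j k, 0 < x.2.1 j k) ∧ (∀ k, 0 < x.2.2 k)

/-- Bregman divergence of the entropy kernel on triples -/
def Breg (y x : LRTriple n m r) : ℝ :=
  (∑ i, ∑ k, (y.1 i k * Real.log (y.1 i k / x.1 i k) - y.1 i k + x.1 i k)) +
  (∑ j, ∑ k, (y.2.1 j k * Real.log (y.2.1 j k / x.2.1 j k) - y.2.1 j k + x.2.1 j k)) +
  (∑ k, (y.2.2 k * Real.log (y.2.2 k / x.2.2 k) - y.2.2 k + x.2.2 k))

/-- symmetrized divergence -/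
def Ssym (x y : LRTriple n m r) : ℝ :=
  (∑ i, ∑ k, (x.1 i k - y.1 i k) * (Real.log (x.1 i k) - Real.log (y.1 i k))) +
  (∑ j, ∑ k, (x.2.1 j k - y.2.1 j k) * (Real.log (x.2.1 j k) - Real.log (y.2.1 j k))) +
  (∑ k, (x.2.2 k - y.2.2 k) * (Real.log (x.2.2 k) - Real.log (y.2.2 k)))

/-- squared distance -/
def NsqT (y x : LRTriple n m r) : ℝ :=
  (∑ i, ∑ k, (y.1 i k - x.1 i k) ^ 2) +
  (∑ j, ∑ k, (y.2.1 j k - x.2.1 j k) ^ 2) +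
  (∑ k, (y.2.2 k - x.2.2 k) ^ 2)

lemma Breg_nonneg {x y : LRTriple n m r} (hx : PosT x) (hy : PosT y) : 0 ≤ Breg y x := by
  obtain ⟨hx1, hx2, hx3⟩ := hx
  obtain ⟨hy1, hy2, hy3⟩ := hy
  unfold Breg
  have t1 : (0:ℝ) ≤ ∑ i, ∑ k, (y.1 i k * Real.log (y.1 i k / x.1 i k) - y.1 i k + x.1 i k) :=
    Finset.sum_nonneg fun i _ => Finset.sum_nonneg fun k _ => aux_breg_nonneg (hx1 i k) (hy1 i k)
  have t2 : (0:ℝ) ≤ ∑ j, ∑ k, (y.2.1 j k * Real.log (y.2.1 j k / x.2.1 j k) - y.2.1 j k + x.2.1 j k) :=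
    Finset.sum_nonneg fun j _ => Finset.sum_nonneg fun k _ => aux_breg_nonneg (hx2 j k) (hy2 j k)
  have t3 : (0:ℝ) ≤ ∑ k, (y.2.2 k * Real.log (y.2.2 k / x.2.2 k) - y.2.2 k + x.2.2 k) :=
    Finset.sum_nonneg fun k _ => aux_breg_nonneg (hx3 k) (hy3 k)
  linarith

lemma Ssym_eq_Breg {x y : LRTriple n m r} (hx : PosT x) (hy : PosT y) :
    Ssym x y = Breg y x + Breg x y := by
  obtain ⟨hx1, hx2, hx3⟩ := hx
  obtain ⟨hy1, hy2, hy3⟩ := hy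
  unfold Ssym Breg
  rw [show ∀ A B C D E F : ℝ, (A + B + C) + (D + E + F) = (A + D) + (B + E) + (C + F) from by intros; ring]
  · congr 1
    · congr 1
      · rw [← Finset.sum_add_distrib]
        refine Finset.sum_congr rfl fun i _ => ?_
        rw [← Finset.sum_add_distrib]
        exact Finset.sum_congr rfl fun k _ => aux_ssym_eq (hx1 i k) (hy1 i k)
      · rw [← Finset.sum_add_distrib]
        refine Finset.sum_congr rfl fun j _ => ?_
        rw [← Finset.sum_add_distrib]
        exact Finset.sum_congr rfl fun k _ => aux_ssym_eq (hx2 j k) (hy2 j k)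
    · rw [← Finset.sum_add_distrib]
      exact Finset.sum_congr rfl fun k _ => aux_ssym_eq (hx3 k) (hy3 k)

lemma klsum_le_Ssym {x y : LRTriple n m r} (hx : PosT x) (hy : PosT y) :
    tripleKL x y + tripleKL y x ≤ Ssym x y := by
  obtain ⟨hx1, hx2, hx3⟩ := hx
  obtain ⟨hy1, hy2, hy3⟩ := hy
  unfold tripleKL Ssym matKL vecKL
  have t1 : (∑ i, ∑ k, x.1 i k * (Real.log (x.1 i k / y.1 i k) - 1)) +
      (∑ i, ∑ k, y.1 i k * (Real.log (y.1 i k / x.1 i k) - 1)) ≤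
      ∑ i, ∑ k, (x.1 i k - y.1 i k) * (Real.log (x.1 i k) - Real.log (y.1 i k)) := by
    rw [← Finset.sum_add_distrib]
    refine Finset.sum_le_sum fun i _ => ?_
    rw [← Finset.sum_add_distrib]
    exact Finset.sum_le_sum fun k _ => aux_klsum_le (hx1 i k) (hy1 i k)
  have t2 : (∑ j, ∑ k, x.2.1 j k * (Real.log (x.2.1 j k / y.2.1 j k) - 1)) +
      (∑ j, ∑ k, y.2.1 j k * (Real.log (y.2.1 j k / x.2.1 j k) - 1)) ≤
      ∑ j, ∑ k, (x.2.1 j k - y.2.1 j k) * (Real.log (x.2.1 j k) - Real.log (y.2.1 j k)) := by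
    rw [← Finset.sum_add_distrib]
    refine Finset.sum_le_sum fun j _ => ?_
    rw [← Finset.sum_add_distrib]
    exact Finset.sum_le_sum fun k _ => aux_klsum_le (hx2 j k) (hy2 j k)
  have t3 : (∑ k, x.2.2 k * (Real.log (x.2.2 k / y.2.2 k) - 1)) +
      (∑ k, y.2.2 k * (Real.log (y.2.2 k / x.2.2 k) - 1)) ≤
      ∑ k, (x.2.2 k - y.2.2 k) * (Real.log (x.2.2 k) - Real.log (y.2.2 k)) := by
    rw [← Finset.sum_add_distrib]
    exact Finset.sum_le_sum fun k _ => aux_klsum_le (hx3 k) (hy3 k)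
  linarith

lemma NsqT_le_two_Breg {x y : LRTriple n m r} (hx : PosT x) (hy : PosT y)
    (hx1 : ∀ i k, x.1 i k ≤ 1) (hx2 : ∀ j k, x.2.1 j k ≤ 1) (hx3 : ∀ k, x.2.2 k ≤ 1)
    (hy1 : ∀ i k, y.1 i k ≤ 1) (hy2 : ∀ j k, y.2.1 j k ≤ 1) (hy3 : ∀ k, y.2.2 k ≤ 1) :
    NsqT y x ≤ 2 * Breg y x := by
  obtain ⟨hpx1, hpx2, hpx3⟩ := hx
  obtain ⟨hpy1, hpy2, hpy3⟩ := hy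
  unfold NsqT Breg
  have t1 : (∑ i, ∑ k, (y.1 i k - x.1 i k) ^ 2) ≤
      2 * ∑ i, ∑ k, (y.1 i k * Real.log (y.1 i k / x.1 i k) - y.1 i k + x.1 i k) := by
    rw [Finset.mul_sum]
    refine Finset.sum_le_sum fun i _ => ?_
    rw [Finset.mul_sum]
    refine Finset.sum_le_sum fun k _ => ?_
    have := aux_breg_quad (hpx1 i k) (hx1 i k) (hpy1 i k) (hy1 i k)
    linarith
  have t2 : (∑ j, ∑ k, (y.2.1 j k - x.2.1 j k) ^ 2) ≤
      2 * ∑ j, ∑ k, (y.2.1 j k * Real.log (y.2.1 j k / x.2.1 j k) - y.2.1 j k + x.2.1 j k) := by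
    rw [Finset.mul_sum]
    refine Finset.sum_le_sum fun j _ => ?_
    rw [Finset.mul_sum]
    refine Finset.sum_le_sum fun k _ => ?_
    have := aux_breg_quad (hpx2 j k) (hx2 j k) (hpy2 j k) (hy2 j k)
    linarith
  have t3 : (∑ k, (y.2.2 k - x.2.2 k) ^ 2) ≤
      2 * ∑ k, (y.2.2 k * Real.log (y.2.2 k / x.2.2 k) - y.2.2 k + x.2.2 k) := by
    rw [Finset.mul_sum]
    refine Finset.sum_le_sum fun k _ => ?_
    have := aux_breg_quad (hpx3 k) (hx3 k) (hpy3 k) (hy3 k)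
    linarith
  linarith

lemma mem_bounds {a : Fin n → ℝ} {b : Fin m → ℝ} {α : ℝ}
    (ha : a ∈ posSimplex n) (hb : b ∈ posSimplex m)
    {x : LRTriple n m r} (hx : x ∈ CsetAlpha a b r α) :
    (∀ i k, 0 ≤ x.1 i k) ∧ (∀ j k, 0 ≤ x.2.1 j k) ∧ (∀ k, α ≤ x.2.2 k) ∧
    (∀ k, ∑ i, x.1 i k = x.2.2 k) ∧ (∀ k, ∑ j, x.2.1 j k = x.2.2 k) ∧
    (∀ i k, x.1 i k ≤ 1) ∧ (∀ j k, x.2.1 j k ≤ 1) ∧ (∀ k, x.2.2 k ≤ 1) := by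
  obtain ⟨⟨hQ0, hR0, hgα, hQrow, hRrow⟩, ⟨_, _, _, hQcol, hRcol⟩⟩ := hx
  have ha1 : ∀ i, a i ≤ 1 := by
    intro i
    rw [← ha.2]
    exact Finset.single_le_sum (fun j _ => (ha.1 j).le) (Finset.mem_univ i)
  have hb1 : ∀ j, b j ≤ 1 := by
    intro j
    rw [← hb.2]
    exact Finset.single_le_sum (fun i _ => (hb.1 i).le) (Finset.mem_univ j)
  have hQa : ∀ i k, x.1 i k ≤ a i := by
    intro i k
    rw [← hQrow i]
    exact Finset.single_le_sum (fun k' _ => hQ0 i k') (Finset.mem_univ k)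
  have hRb : ∀ j k, x.2.1 j k ≤ b j := by
    intro j k
    rw [← hRrow j]
    exact Finset.single_le_sum (fun k' _ => hR0 j k') (Finset.mem_univ k)
  have hg1 : ∀ k, x.2.2 k ≤ 1 := by
    intro k
    rw [← hQcol k, ← ha.2]
    exact Finset.sum_le_sum fun i _ => hQa i k
  exact ⟨hQ0, hR0, hgα, hQcol, hRcol,
    fun i k => le_trans (hQa i k) (ha1 i), fun j k => le_trans (hRb j k) (hb1 j), hg1⟩

lemma sum_rot {f : Fin n → Fin m → Fin r → ℝ} :
    ∑ i, ∑ j, ∑ k, f i j k = ∑ k, ∑ i, ∑ j, f i j k := by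
  rw [show (∑ i, ∑ j, ∑ k, f i j k) = ∑ i, ∑ k, ∑ j, f i j k from
    Finset.sum_congr rfl fun i _ => Finset.sum_comm]
  exact Finset.sum_comm

/-- the transport quadratic form of column k -/
def colA {n m r : ℕ} (C : Mat n m) (Q : Mat n r) (R : Mat m r) (k : Fin r) : ℝ :=
  ∑ i, ∑ j, Q i k * (C i j * R j k)

/-- negative entropy sums -/
def EntS {n m r : ℕ} (x : LRTriple n m r) : ℝ :=
  (∑ i, ∑ k, x.1 i k * (Real.log (x.1 i k) - 1)) +
  (∑ j, ∑ k, x.2.1 j k * (Real.log (x.2.1 j k) - 1)) +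
  (∑ k, x.2.2 k * (Real.log (x.2.2 k) - 1))

lemma Fobj_expand (C : Mat n m) (ε : ℝ) (x : LRTriple n m r) :
    Fobj C ε x = (∑ k, colA C x.1 x.2.1 k * (x.2.2 k)⁻¹) + ε * EntS x := by
  unfold Fobj frobInner matH vecH EntS colA
  have hmat : ∀ i j, (x.1 * Matrix.diagonal (fun i => (x.2.2 i)⁻¹) * x.2.1ᵀ) i j =
      ∑ k, x.1 i k * (x.2.2 k)⁻¹ * x.2.1 j k := by
    intro i j
    rw [Matrix.mul_apply]
    exact Finset.sum_congr rfl fun k _ => by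
      rw [Matrix.mul_diagonal, Matrix.transpose_apply]
  have h1 : (∑ i, ∑ j, C i j * (x.1 * Matrix.diagonal (fun i => (x.2.2 i)⁻¹) * x.2.1ᵀ) i j)
      = ∑ k, (∑ i, ∑ j, x.1 i k * (C i j * x.2.1 j k)) * (x.2.2 k)⁻¹ := by
    have : ∀ i j, C i j * (x.1 * Matrix.diagonal (fun i => (x.2.2 i)⁻¹) * x.2.1ᵀ) i j
        = ∑ k, x.1 i k * (C i j * x.2.1 j k) * (x.2.2 k)⁻¹ := by
      intro i j
      rw [hmat, Finset.mul_sum]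
      exact Finset.sum_congr rfl fun k _ => by ring
    calc (∑ i, ∑ j, C i j * (x.1 * Matrix.diagonal (fun i => (x.2.2 i)⁻¹) * x.2.1ᵀ) i j)
        = ∑ i, ∑ j, ∑ k, x.1 i k * (C i j * x.2.1 j k) * (x.2.2 k)⁻¹ := by
          exact Finset.sum_congr rfl fun i _ => Finset.sum_congr rfl fun j _ => this i j
      _ = ∑ k, ∑ i, ∑ j, x.1 i k * (C i j * x.2.1 j k) * (x.2.2 k)⁻¹ := sum_rot
      _ = ∑ k, (∑ i, ∑ j, x.1 i k * (C i j * x.2.1 j k)) * (x.2.2 k)⁻¹ := by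
          refine Finset.sum_congr rfl fun k _ => ?_
          rw [Finset.sum_mul]
          refine Finset.sum_congr rfl fun i _ => ?_
          rw [Finset.sum_mul]
  rw [h1]
  ring

lemma gradF_inner_expand (C : Mat n m) (ε : ℝ) (x z : LRTriple n m r) :
    tripleInner (gradF C ε x) z =
      (∑ k, ((∑ i, ∑ j, z.1 i k * (C i j * x.2.1 j k)) * (x.2.2 k)⁻¹
        + (∑ i, ∑ j, x.1 i k * (C i j * z.2.1 j k)) * (x.2.2 k)⁻¹
        - colA C x.1 x.2.1 k / (x.2.2 k) ^ 2 * z.2.2 k))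
      + ε * ((∑ i, ∑ k, Real.log (x.1 i k) * z.1 i k)
        + (∑ j, ∑ k, Real.log (x.2.1 j k) * z.2.1 j k)
        + ∑ k, Real.log (x.2.2 k) * z.2.2 k) := by
  unfold tripleInner gradF frobInner colA
  simp only [Matrix.of_apply]
  have h1 : (∑ i, ∑ k, ((C * x.2.1) i k * (x.2.2 k)⁻¹ + ε * Real.log (x.1 i k)) * z.1 i k)
      = (∑ k, (∑ i, ∑ j, z.1 i k * (C i j * x.2.1 j k)) * (x.2.2 k)⁻¹)
        + ε * (∑ i, ∑ k, Real.log (x.1 i k) * z.1 i k) := by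
    have e1 : ∀ i k, ((C * x.2.1) i k * (x.2.2 k)⁻¹ + ε * Real.log (x.1 i k)) * z.1 i k
        = (∑ j, z.1 i k * (C i j * x.2.1 j k)) * (x.2.2 k)⁻¹
          + ε * (Real.log (x.1 i k) * z.1 i k) := by
      intro i k
      rw [Matrix.mul_apply]
      rw [show (∑ j, z.1 i k * (C i j * x.2.1 j k)) = (∑ j, C i j * x.2.1 j k) * z.1 i k from by
        rw [Finset.sum_mul]; exact Finset.sum_congr rfl fun j _ => by ring]
      ring
    calc (∑ i, ∑ k, ((C * x.2.1) i k * (x.2.2 k)⁻¹ + ε * Real.log (x.1 i k)) * z.1 i k)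
        = ∑ i, ∑ k, ((∑ j, z.1 i k * (C i j * x.2.1 j k)) * (x.2.2 k)⁻¹
            + ε * (Real.log (x.1 i k) * z.1 i k)) :=
          Finset.sum_congr rfl fun i _ => Finset.sum_congr rfl fun k _ => e1 i k
      _ = (∑ i, ∑ k, (∑ j, z.1 i k * (C i j * x.2.1 j k)) * (x.2.2 k)⁻¹)
            + ∑ i, ∑ k, ε * (Real.log (x.1 i k) * z.1 i k) := by
          simp only [Finset.sum_add_distrib]
      _ = (∑ k, (∑ i, ∑ j, z.1 i k * (C i j * x.2.1 j k)) * (x.2.2 k)⁻¹)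
            + ε * (∑ i, ∑ k, Real.log (x.1 i k) * z.1 i k) := by
          congr 1
          · rw [Finset.sum_comm]
            exact Finset.sum_congr rfl fun k _ => by rw [← Finset.sum_mul]
          · simp only [← Finset.mul_sum]
  have h2 : (∑ j, ∑ k, ((Cᵀ * x.1) j k * (x.2.2 k)⁻¹ + ε * Real.log (x.2.1 j k)) * z.2.1 j k)
      = (∑ k, (∑ i, ∑ j, x.1 i k * (C i j * z.2.1 j k)) * (x.2.2 k)⁻¹)
        + ε * (∑ j, ∑ k, Real.log (x.2.1 j k) * z.2.1 j k) := by
    have e1 : ∀ j k, ((Cᵀ * x.1) j k * (x.2.2 k)⁻¹ + ε * Real.log (x.2.1 j k)) * z.2.1 j k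
        = (∑ i, x.1 i k * (C i j * z.2.1 j k)) * (x.2.2 k)⁻¹
          + ε * (Real.log (x.2.1 j k) * z.2.1 j k) := by
      intro j k
      rw [Matrix.mul_apply]
      rw [show (∑ i, x.1 i k * (C i j * z.2.1 j k)) = (∑ i, Cᵀ j i * x.1 i k) * z.2.1 j k from by
        rw [Finset.sum_mul]
        exact Finset.sum_congr rfl fun i _ => by rw [Matrix.transpose_apply]; ring]
      ring
    calc (∑ j, ∑ k, ((Cᵀ * x.1) j k * (x.2.2 k)⁻¹ + ε * Real.log (x.2.1 j k)) * z.2.1 j k)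
        = ∑ j, ∑ k, ((∑ i, x.1 i k * (C i j * z.2.1 j k)) * (x.2.2 k)⁻¹
            + ε * (Real.log (x.2.1 j k) * z.2.1 j k)) :=
          Finset.sum_congr rfl fun j _ => Finset.sum_congr rfl fun k _ => e1 j k
      _ = (∑ j, ∑ k, (∑ i, x.1 i k * (C i j * z.2.1 j k)) * (x.2.2 k)⁻¹)
            + ∑ j, ∑ k, ε * (Real.log (x.2.1 j k) * z.2.1 j k) := by
          simp only [Finset.sum_add_distrib]
      _ = (∑ k, (∑ i, ∑ j, x.1 i k * (C i j * z.2.1 j k)) * (x.2.2 k)⁻¹)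
            + ε * (∑ j, ∑ k, Real.log (x.2.1 j k) * z.2.1 j k) := by
          congr 1
          · rw [Finset.sum_comm]
            refine Finset.sum_congr rfl fun k _ => ?_
            rw [← Finset.sum_mul]
            congr 1
            exact Finset.sum_comm
          · simp only [← Finset.mul_sum]
  have h3 : (∑ k, (-((x.1ᵀ * C * x.2.1) k k) / x.2.2 k ^ 2 + ε * Real.log (x.2.2 k)) * z.2.2 k)
      = (∑ k, -((∑ i, ∑ j, x.1 i k * (C i j * x.2.1 j k)) / (x.2.2 k) ^ 2 * z.2.2 k))
        + ε * ∑ k, Real.log (x.2.2 k) * z.2.2 k := by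
    have e0 : ∀ k, (x.1ᵀ * C * x.2.1) k k = ∑ i, ∑ j, x.1 i k * (C i j * x.2.1 j k) := by
      intro k
      rw [Matrix.mul_apply]
      calc (∑ j, (x.1ᵀ * C) k j * x.2.1 j k)
          = ∑ j, ∑ i, x.1 i k * (C i j * x.2.1 j k) := by
            refine Finset.sum_congr rfl fun j _ => ?_
            rw [Matrix.mul_apply, Finset.sum_mul]
            refine Finset.sum_congr rfl fun i _ => ?_
            rw [Matrix.transpose_apply]; ring
        _ = ∑ i, ∑ j, x.1 i k * (C i j * x.2.1 j k) := Finset.sum_comm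
    calc (∑ k, (-((x.1ᵀ * C * x.2.1) k k) / x.2.2 k ^ 2 + ε * Real.log (x.2.2 k)) * z.2.2 k)
        = ∑ k, (-((∑ i, ∑ j, x.1 i k * (C i j * x.2.1 j k)) / (x.2.2 k) ^ 2 * z.2.2 k)
            + ε * (Real.log (x.2.2 k) * z.2.2 k)) := by
          refine Finset.sum_congr rfl fun k _ => ?_
          rw [e0 k]; ring
      _ = (∑ k, -((∑ i, ∑ j, x.1 i k * (C i j * x.2.1 j k)) / (x.2.2 k) ^ 2 * z.2.2 k))
            + ε * ∑ k, Real.log (x.2.2 k) * z.2.2 k := by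
          rw [Finset.sum_add_distrib]
          congr 1
          simp only [← Finset.mul_sum]
  rw [h1, h2, h3]
  have hsplit : (∑ k, ((∑ i, ∑ j, z.1 i k * (C i j * x.2.1 j k)) * (x.2.2 k)⁻¹
        + (∑ i, ∑ j, x.1 i k * (C i j * z.2.1 j k)) * (x.2.2 k)⁻¹
        - (∑ i, ∑ j, x.1 i k * (C i j * x.2.1 j k)) / (x.2.2 k) ^ 2 * z.2.2 k))
      = (∑ k, (∑ i, ∑ j, z.1 i k * (C i j * x.2.1 j k)) * (x.2.2 k)⁻¹)
        + (∑ k, (∑ i, ∑ j, x.1 i k * (C i j * z.2.1 j k)) * (x.2.2 k)⁻¹)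
        + ∑ k, -((∑ i, ∑ j, x.1 i k * (C i j * x.2.1 j k)) / (x.2.2 k) ^ 2 * z.2.2 k) := by
    rw [← Finset.sum_add_distrib, ← Finset.sum_add_distrib]
    exact Finset.sum_congr rfl fun k _ => by ring
  rw [hsplit]
  ring

lemma sub_dsum {p q : ℕ} (f g : Fin p → Fin q → ℝ) :
    (∑ i, ∑ k, f i k) - (∑ i, ∑ k, g i k) = ∑ i, ∑ k, (f i k - g i k) := by
  rw [← Finset.sum_sub_distrib]
  exact Finset.sum_congr rfl fun i _ => by rw [← Finset.sum_sub_distrib]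

/-- relative smoothness of `Fobj` on the constraint set -/
lemma Fobj_smooth {a : Fin n → ℝ} {b : Fin m → ℝ} {α ε Lg : ℝ} (C : Mat n m)
    (ha : a ∈ posSimplex n) (hb : b ∈ posSimplex m) (hα : 0 < α) (hε : 0 ≤ ε)
    (hLg : ε + 3 * specNorm C / α ≤ Lg)
    {x y : LRTriple n m r} (hx : x ∈ CsetAlpha a b r α) (hy : y ∈ CsetAlpha a b r α)
    (hpx : PosT x) (hpy : PosT y) :
    Fobj C ε y ≤ Fobj C ε x +
      (tripleInner (gradF C ε x) y - tripleInner (gradF C ε x) x) + Lg * Breg y x := by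
  obtain ⟨hxQ0, hxR0, hxgα, hxQc, hxRc, hxQ1, hxR1, hxg1⟩ := mem_bounds ha hb hx
  obtain ⟨hyQ0, hyR0, hygα, hyQc, hyRc, hyQ1, hyR1, hyg1⟩ := mem_bounds ha hb hy
  set σ := specNorm C with hσdef
  have hσ : 0 ≤ σ := specNorm_nonneg C
  set Q := x.1; set R := x.2.1; set g := x.2.2
  set Q' := y.1; set R' := y.2.1; set g' := y.2.2
  have hg0 : ∀ k, (0:ℝ) < g k := fun k => lt_of_lt_of_le hα (hxgα k)
  have hg'0 : ∀ k, (0:ℝ) < g' k := fun k => lt_of_lt_of_le hα (hygα k)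
  -- per-column quantities
  set A : Fin r → ℝ := fun k => ∑ i, ∑ j, Q i k * (C i j * R j k) with hAdef
  set B1 : Fin r → ℝ := fun k => ∑ i, ∑ j, (Q' i k - Q i k) * (C i j * R j k) with hB1def
  set B2 : Fin r → ℝ := fun k => ∑ i, ∑ j, Q i k * (C i j * (R' j k - R j k)) with hB2def
  set E : Fin r → ℝ := fun k => ∑ i, ∑ j, (Q' i k - Q i k) * (C i j * (R' j k - R j k)) with hEdef
  set u : Fin r → ℝ := fun k => Real.sqrt (∑ i, (Q' i k - Q i k) ^ 2) with hudef
  set v : Fin r → ℝ := fun k => Real.sqrt (∑ j, (R' j k - R j k) ^ 2) with hvdef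
  -- bilinearity decompositions
  have hsplitY : ∀ k, colA C Q' R' k = A k + B1 k + B2 k + E k := by
    intro k
    unfold colA
    have : ∀ i j, Q' i k * (C i j * R' j k) =
        Q i k * (C i j * R j k) + (Q' i k - Q i k) * (C i j * R j k)
          + Q i k * (C i j * (R' j k - R j k))
          + (Q' i k - Q i k) * (C i j * (R' j k - R j k)) := by intro i j; ring
    rw [Finset.sum_congr rfl fun i _ => Finset.sum_congr rfl fun j _ => this i j]
    simp only [Finset.sum_add_distrib]
    rfl
  have hsplitQ' : ∀ k, (∑ i, ∑ j, Q' i k * (C i j * R j k)) = A k + B1 k := by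
    intro k
    have : ∀ i j, Q' i k * (C i j * R j k) =
        Q i k * (C i j * R j k) + (Q' i k - Q i k) * (C i j * R j k) := by intro i j; ring
    rw [Finset.sum_congr rfl fun i _ => Finset.sum_congr rfl fun j _ => this i j]
    simp only [Finset.sum_add_distrib]
    rfl
  have hsplitR' : ∀ k, (∑ i, ∑ j, Q i k * (C i j * R' j k)) = A k + B2 k := by
    intro k
    have : ∀ i j, Q i k * (C i j * R' j k) =
        Q i k * (C i j * R j k) + Q i k * (C i j * (R' j k - R j k)) := by intro i j; ring
    rw [Finset.sum_congr rfl fun i _ => Finset.sum_congr rfl fun j _ => this i j]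
    simp only [Finset.sum_add_distrib]
    rfl
  -- norm bounds
  have hQl2 : ∀ k, Real.sqrt (∑ i, Q i k ^ 2) ≤ g k := by
    intro k
    rw [← hxQc k]
    exact aux_l2_le_l1 _ (fun i => hxQ0 i k)
  have hRl2 : ∀ k, Real.sqrt (∑ j, R j k ^ 2) ≤ g k := by
    intro k
    rw [← hxRc k]
    exact aux_l2_le_l1 _ (fun j => hxR0 j k)
  have hu0 : ∀ k, 0 ≤ u k := fun k => Real.sqrt_nonneg _
  have hv0 : ∀ k, 0 ≤ v k := fun k => Real.sqrt_nonneg _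
  have hAb : ∀ k, |A k| ≤ σ * (g k * g k) := by
    intro k
    refine le_trans (aux_cs_bound C _ _) ?_
    gcongr <;> first
      | exact Real.sqrt_nonneg _
      | exact hQl2 k
      | exact hRl2 k
      | exact le_trans hα.le (hxgα k)
      | positivity
  have hB1b : ∀ k, |B1 k| ≤ σ * (u k * g k) := by
    intro k
    refine le_trans (aux_cs_bound C _ _) ?_
    gcongr <;> first
      | exact Real.sqrt_nonneg _
      | exact hRl2 k
      | exact le_trans hα.le (hxgα k)
      | positivity
  have hB2b : ∀ k, |B2 k| ≤ σ * (g k * v k) := by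
    intro k
    refine le_trans (aux_cs_bound C _ _) ?_
    gcongr <;> first
      | exact Real.sqrt_nonneg _
      | exact hQl2 k
      | exact le_trans hα.le (hxgα k)
      | positivity
  have hEb : ∀ k, |E k| ≤ σ * (u k * v k) := fun k => aux_cs_bound C _ _
  -- transport remainder
  have hrem : (∑ k, colA C Q' R' k * (g' k)⁻¹) - (∑ k, colA C Q R k * (g k)⁻¹)
      - ((∑ k, ((∑ i, ∑ j, Q' i k * (C i j * R j k)) * (g k)⁻¹
          + (∑ i, ∑ j, Q i k * (C i j * R' j k)) * (g k)⁻¹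
          - colA C Q R k / (g k) ^ 2 * g' k))
        - (∑ k, ((∑ i, ∑ j, Q i k * (C i j * R j k)) * (g k)⁻¹
          + (∑ i, ∑ j, Q i k * (C i j * R j k)) * (g k)⁻¹
          - colA C Q R k / (g k) ^ 2 * g k)))
      = ∑ k, ((A k + B1 k + B2 k + E k) / g' k - A k / g k - (B1 k + B2 k) / g k
          + A k * (g' k - g k) / (g k) ^ 2) := by
    rw [← Finset.sum_sub_distrib, ← Finset.sum_sub_distrib, ← Finset.sum_sub_distrib]
    refine Finset.sum_congr rfl fun k _ => ?_
    rw [hsplitY k, hsplitQ' k, hsplitR' k]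
    have hcolA : colA C Q R k = A k := rfl
    rw [hcolA, show (∑ i, ∑ j, Q i k * (C i j * R j k)) = A k from rfl]
    field_simp [(hg0 k).ne', (hg'0 k).ne']
    ring
  have hremb : (∑ k, ((A k + B1 k + B2 k + E k) / g' k - A k / g k - (B1 k + B2 k) / g k
          + A k * (g' k - g k) / (g k) ^ 2))
      ≤ 3 * σ / (2 * α) * NsqT y x := by
    have hperk : ∀ k, (A k + B1 k + B2 k + E k) / g' k - A k / g k - (B1 k + B2 k) / g k
        + A k * (g' k - g k) / (g k) ^ 2
        ≤ 3 * σ / (2 * α) * (u k ^ 2 + v k ^ 2 + (g' k - g k) ^ 2) :=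
      fun k => aux_perk σ α (A k) (B1 k) (B2 k) (E k) (g k) (g' k) (u k) (v k)
        hσ hα (hxgα k) (hygα k) (hAb k) (hB1b k) (hB2b k) (hEb k) (hu0 k) (hv0 k)
    refine le_trans (Finset.sum_le_sum fun k _ => hperk k) ?_
    have husq : ∀ k, u k ^ 2 = ∑ i, (Q' i k - Q i k) ^ 2 := by
      intro k
      rw [hudef]
      exact Real.sq_sqrt (Finset.sum_nonneg fun i _ => sq_nonneg _)
    have hvsq : ∀ k, v k ^ 2 = ∑ j, (R' j k - R j k) ^ 2 := by
      intro k
      rw [hvdef]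
      exact Real.sq_sqrt (Finset.sum_nonneg fun j _ => sq_nonneg _)
    have : (∑ k, (u k ^ 2 + v k ^ 2 + (g' k - g k) ^ 2)) = NsqT y x := by
      rw [Finset.sum_congr rfl fun k _ => by rw [husq k, hvsq k]]
      unfold NsqT
      rw [Finset.sum_add_distrib, Finset.sum_add_distrib]
      congr 1
      · congr 1
        · exact Finset.sum_comm
        · exact Finset.sum_comm
    rw [← this, Finset.mul_sum]
  -- entropy part
  have hent : EntS y - EntS x
      - (((∑ i, ∑ k, Real.log (Q i k) * Q' i k) + (∑ j, ∑ k, Real.log (R j k) * R' j k)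
          + ∑ k, Real.log (g k) * g' k)
        - ((∑ i, ∑ k, Real.log (Q i k) * Q i k) + (∑ j, ∑ k, Real.log (R j k) * R j k)
          + ∑ k, Real.log (g k) * g k))
      = Breg y x := by
    have e : ∀ xe ye : ℝ, 0 < xe → 0 < ye →
        ye * (Real.log ye - 1) - xe * (Real.log xe - 1) - (Real.log xe * ye - Real.log xe * xe)
        = ye * Real.log (ye / xe) - ye + xe := by
      intro xe ye h1 h2
      rw [Real.log_div h2.ne' h1.ne']
      ring
    unfold EntS Breg
    rw [show ∀ P1 P2 P3 Q1 Q2 Q3 R1 R2 R3 S1 S2 S3 : ℝ,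
        (P1 + P2 + P3) - (Q1 + Q2 + Q3) - ((R1 + R2 + R3) - (S1 + S2 + S3))
        = (P1 - Q1 - (R1 - S1)) + (P2 - Q2 - (R2 - S2)) + (P3 - Q3 - (R3 - S3)) from
      by intros; ring]
    congr 1
    · congr 1
      · rw [sub_dsum, sub_dsum, sub_dsum]
        refine Finset.sum_congr rfl fun i _ => ?_
        refine Finset.sum_congr rfl fun k _ => ?_
        exact e _ _ (hpx.1 i k) (hpy.1 i k)
      · rw [sub_dsum, sub_dsum, sub_dsum]
        refine Finset.sum_congr rfl fun j _ => ?_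
        refine Finset.sum_congr rfl fun k _ => ?_
        exact e _ _ (hpx.2.1 j k) (hpy.2.1 j k)
    · rw [← Finset.sum_sub_distrib, ← Finset.sum_sub_distrib, ← Finset.sum_sub_distrib]
      exact Finset.sum_congr rfl fun k _ => e _ _ (hpx.2.2 k) (hpy.2.2 k)
  -- assemble
  have hexpx := Fobj_expand C ε x
  have hexpy := Fobj_expand C ε y
  have hgy := gradF_inner_expand C ε x y
  have hgx := gradF_inner_expand C ε x x
  have hBreg0 : 0 ≤ Breg y x := Breg_nonneg hpx hpy
  have hNsq : NsqT y x ≤ 2 * Breg y x :=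
    NsqT_le_two_Breg hpx hpy hxQ1 hxR1 hxg1 hyQ1 hyR1 hyg1
  have hfinal : Fobj C ε y - Fobj C ε x
      - (tripleInner (gradF C ε x) y - tripleInner (gradF C ε x) x)
      ≤ 3 * σ / (2 * α) * NsqT y x + ε * Breg y x := by
    rw [hexpx, hexpy, hgy, hgx]
    have lhs_eq : ((∑ k, colA C Q' R' k * (g' k)⁻¹) + ε * EntS y)
        - ((∑ k, colA C Q R k * (g k)⁻¹) + ε * EntS x)
        - ((((∑ k, ((∑ i, ∑ j, Q' i k * (C i j * R j k)) * (g k)⁻¹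
            + (∑ i, ∑ j, Q i k * (C i j * R' j k)) * (g k)⁻¹
            - colA C Q R k / (g k) ^ 2 * g' k)))
          + ε * ((∑ i, ∑ k, Real.log (Q i k) * Q' i k)
            + (∑ j, ∑ k, Real.log (R j k) * R' j k) + ∑ k, Real.log (g k) * g' k))
        - (((∑ k, ((∑ i, ∑ j, Q i k * (C i j * R j k)) * (g k)⁻¹
            + (∑ i, ∑ j, Q i k * (C i j * R j k)) * (g k)⁻¹
            - colA C Q R k / (g k) ^ 2 * g k)))
          + ε * ((∑ i, ∑ k, Real.log (Q i k) * Q i k)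
            + (∑ j, ∑ k, Real.log (R j k) * R j k) + ∑ k, Real.log (g k) * g k)))
        = (∑ k, ((A k + B1 k + B2 k + E k) / g' k - A k / g k - (B1 k + B2 k) / g k
            + A k * (g' k - g k) / (g k) ^ 2)) + ε * Breg y x := by
      rw [← hrem, ← hent]
      ring
    rw [lhs_eq]
    have := hremb
    linarith
  have hchain : 3 * σ / (2 * α) * NsqT y x + ε * Breg y x ≤ Lg * Breg y x := by
    have h1 : 3 * σ / (2 * α) * NsqT y x ≤ 3 * σ / (2 * α) * (2 * Breg y x) := by
      apply mul_le_mul_of_nonneg_left hNsq (by positivity)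
    have h2 : 3 * σ / (2 * α) * (2 * Breg y x) = (3 * σ / α) * Breg y x := by
      field_simp
    have h3 : (3 * σ / α) * Breg y x + ε * Breg y x = (ε + 3 * σ / α) * Breg y x := by ring
    have h4 : (ε + 3 * σ / α) * Breg y x ≤ Lg * Breg y x :=
      mul_le_mul_of_nonneg_right hLg hBreg0
    linarith
  linarith

/-- segment from y towards x -/
def segT (y x : LRTriple n m r) (t : ℝ) : LRTriple n m r :=
  (Matrix.of fun i k => y.1 i k + t * (x.1 i k - y.1 i k),
   Matrix.of fun j k => y.2.1 j k + t * (x.2.1 j k - y.2.1 j k),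
   fun k => y.2.2 k + t * (x.2.2 k - y.2.2 k))

lemma segT_zero (y x : LRTriple n m r) : segT y x 0 = y := by
  unfold segT
  refine Prod.ext ?_ (Prod.ext ?_ ?_)
  · ext i k; simp
  · ext j k; simp
  · funext k; simp

lemma segT_mem {a : Fin n → ℝ} {b : Fin m → ℝ} {α : ℝ} (hα : 0 < α)
    {x y : LRTriple n m r} (hx : x ∈ CsetAlpha a b r α) (hy : y ∈ CsetAlpha a b r α)
    {t : ℝ} (ht : 0 ≤ t) (ht1 : t ≤ 1) : segT y x t ∈ CsetAlpha a b r α := by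
  obtain ⟨⟨hxQ0, hxR0, hxgα, hxQrow, hxRrow⟩, ⟨_, _, _, hxQc, hxRc⟩⟩ := hx
  obtain ⟨⟨hyQ0, hyR0, hygα, hyQrow, hyRrow⟩, ⟨_, _, _, hyQc, hyRc⟩⟩ := hy
  have hcomb : ∀ u v : ℝ, 0 ≤ u → 0 ≤ v → 0 ≤ v + t * (u - v) := by
    intro u v hu hv; nlinarith
  have hcombα : ∀ u v : ℝ, α ≤ u → α ≤ v → α ≤ v + t * (u - v) := by
    intro u v hu hv; nlinarith
  have hsum1 : ∀ (p : ℕ) (f h : Fin p → ℝ),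
      (∑ k, (h k + t * (f k - h k))) = (∑ k, h k) + t * ((∑ k, f k) - ∑ k, h k) := by
    intro p f h
    rw [Finset.sum_add_distrib, ← Finset.mul_sum, ← Finset.sum_sub_distrib]
  refine ⟨⟨?_, ?_, ?_, ?_, ?_⟩, ?_, ?_, ?_, ?_, ?_⟩
  · intro i k; simpa [segT] using hcomb _ _ (hxQ0 i k) (hyQ0 i k)
  · intro j k; simpa [segT] using hcomb _ _ (hxR0 j k) (hyR0 j k)
  · intro k; simpa [segT] using hcombα _ _ (hxgα k) (hygα k)
  · intro i
    simp only [segT, Matrix.of_apply]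
    rw [hsum1 r (fun k => x.1 i k) (fun k => y.1 i k), hxQrow i, hyQrow i]
    ring
  · intro j
    simp only [segT, Matrix.of_apply]
    rw [hsum1 r (fun k => x.2.1 j k) (fun k => y.2.1 j k), hxRrow j, hyRrow j]
    ring
  · intro i k; simpa [segT] using hcomb _ _ (hxQ0 i k) (hyQ0 i k)
  · intro j k; simpa [segT] using hcomb _ _ (hxR0 j k) (hyR0 j k)
  · intro k
    simpa [segT] using hcomb _ _ (le_trans hα.le (hxgα k)) (le_trans hα.le (hygα k))
  · intro k
    simp only [segT, Matrix.of_apply]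
    rw [hsum1 n (fun i => x.1 i k) (fun i => y.1 i k), hxQc k, hyQc k]
  · intro k
    simp only [segT, Matrix.of_apply]
    rw [hsum1 m (fun j => x.2.1 j k) (fun j => y.2.1 j k), hxRc k, hyRc k]

lemma tripleInner_seg (c x y : LRTriple n m r) (t : ℝ) :
    tripleInner c (segT y x t) =
      tripleInner c y + t * (tripleInner c x - tripleInner c y) := by
  unfold tripleInner frobInner segT
  simp only [Matrix.of_apply]
  have hblk : ∀ (p q : ℕ) (Cc Y X : Fin p → Fin q → ℝ),
      (∑ i, ∑ k, Cc i k * (Y i k + t * (X i k - Y i k)))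
        = (∑ i, ∑ k, Cc i k * Y i k)
          + t * ((∑ i, ∑ k, Cc i k * X i k) - ∑ i, ∑ k, Cc i k * Y i k) := by
    intro p q Cc Y X
    calc (∑ i, ∑ k, Cc i k * (Y i k + t * (X i k - Y i k)))
        = ∑ i, ∑ k, (Cc i k * Y i k + t * (Cc i k * X i k - Cc i k * Y i k)) :=
          Finset.sum_congr rfl fun i _ => Finset.sum_congr rfl fun k _ => by ring
      _ = (∑ i, ∑ k, Cc i k * Y i k) + ∑ i, ∑ k, t * (Cc i k * X i k - Cc i k * Y i k) := by
          simp only [Finset.sum_add_distrib]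
      _ = (∑ i, ∑ k, Cc i k * Y i k) + t * ∑ i, ∑ k, (Cc i k * X i k - Cc i k * Y i k) := by
          simp only [← Finset.mul_sum]
      _ = (∑ i, ∑ k, Cc i k * Y i k)
          + t * ((∑ i, ∑ k, Cc i k * X i k) - ∑ i, ∑ k, Cc i k * Y i k) := by
          rw [← sub_dsum]
  have hvec : (∑ k, c.2.2 k * (y.2.2 k + t * (x.2.2 k - y.2.2 k)))
      = (∑ k, c.2.2 k * y.2.2 k)
        + t * ((∑ k, c.2.2 k * x.2.2 k) - ∑ k, c.2.2 k * y.2.2 k) := by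
    calc (∑ k, c.2.2 k * (y.2.2 k + t * (x.2.2 k - y.2.2 k)))
        = ∑ k, (c.2.2 k * y.2.2 k + t * (c.2.2 k * x.2.2 k - c.2.2 k * y.2.2 k)) :=
          Finset.sum_congr rfl fun k _ => by ring
      _ = (∑ k, c.2.2 k * y.2.2 k) + ∑ k, t * (c.2.2 k * x.2.2 k - c.2.2 k * y.2.2 k) := by
          rw [Finset.sum_add_distrib]
      _ = (∑ k, c.2.2 k * y.2.2 k)
          + t * ((∑ k, c.2.2 k * x.2.2 k) - ∑ k, c.2.2 k * y.2.2 k) := by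
          rw [← Finset.mul_sum, ← Finset.sum_sub_distrib]
  rw [hblk n r (fun i k => c.1 i k) (fun i k => y.1 i k) (fun i k => x.1 i k),
    hblk m r (fun j k => c.2.1 j k) (fun j k => y.2.1 j k) (fun j k => x.2.1 j k), hvec]
  ring

/-- first-order optimality: the variational inequality at the prox minimizer -/
lemma vi_key {a : Fin n → ℝ} {b : Fin m → ℝ} {α : ℝ} (hα : 0 < α)
    (c : LRTriple n m r) {x y : LRTriple n m r} {s : ℝ}
    (hx : x ∈ CsetAlpha a b r α) (hy : y ∈ CsetAlpha a b r α)
    (hpx : PosT x) (hpy : PosT y)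
    (hmin : ∀ ζ ∈ CsetAlpha a b r α,
      tripleInner c y + s * tripleKL y x ≤ tripleInner c ζ + s * tripleKL ζ x) :
    s * Ssym x y ≤ tripleInner c x - tripleInner c y := by
  set φ : ℝ → ℝ := fun t => tripleInner c (segT y x t) + s * tripleKL (segT y x t) x with hφdef
  -- explicit form of φ
  have hφeq : φ = fun t =>
      ((∑ i, ∑ k, (c.1 i k * (y.1 i k + t * (x.1 i k - y.1 i k)) +
        s * ((y.1 i k + t * (x.1 i k - y.1 i k)) *
          (Real.log ((y.1 i k + t * (x.1 i k - y.1 i k)) / x.1 i k) - 1))))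
      + (∑ j, ∑ k, (c.2.1 j k * (y.2.1 j k + t * (x.2.1 j k - y.2.1 j k)) +
        s * ((y.2.1 j k + t * (x.2.1 j k - y.2.1 j k)) *
          (Real.log ((y.2.1 j k + t * (x.2.1 j k - y.2.1 j k)) / x.2.1 j k) - 1))))
      + (∑ k, (c.2.2 k * (y.2.2 k + t * (x.2.2 k - y.2.2 k)) +
        s * ((y.2.2 k + t * (x.2.2 k - y.2.2 k)) *
          (Real.log ((y.2.2 k + t * (x.2.2 k - y.2.2 k)) / x.2.2 k) - 1))))) := by
    funext t
    simp only [hφdef, tripleInner, tripleKL, matKL, vecKL, frobInner, segT, Matrix.of_apply]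
    simp only [Finset.sum_add_distrib, ← Finset.mul_sum]
    ring
  -- derivative at 0
  set D : ℝ := (tripleInner c x - tripleInner c y) - s * Ssym x y with hDdef
  have hD1 : HasDerivAt (fun t : ℝ =>
      (∑ i, ∑ k, (c.1 i k * (y.1 i k + t * (x.1 i k - y.1 i k)) +
        s * ((y.1 i k + t * (x.1 i k - y.1 i k)) *
          (Real.log ((y.1 i k + t * (x.1 i k - y.1 i k)) / x.1 i k) - 1)))))
      (∑ i, ∑ k, ((x.1 i k - y.1 i k) * c.1 i k +
        s * ((x.1 i k - y.1 i k) * (Real.log (y.1 i k) - Real.log (x.1 i k))))) 0 := by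
    refine HasDerivAt.fun_sum fun i _ => HasDerivAt.fun_sum fun k _ => ?_
    exact aux_hasDeriv_entry (c.1 i k) (x.1 i k) (y.1 i k) s (hpx.1 i k) (hpy.1 i k)
  have hD2 : HasDerivAt (fun t : ℝ =>
      (∑ j, ∑ k, (c.2.1 j k * (y.2.1 j k + t * (x.2.1 j k - y.2.1 j k)) +
        s * ((y.2.1 j k + t * (x.2.1 j k - y.2.1 j k)) *
          (Real.log ((y.2.1 j k + t * (x.2.1 j k - y.2.1 j k)) / x.2.1 j k) - 1)))))
      (∑ j, ∑ k, ((x.2.1 j k - y.2.1 j k) * c.2.1 j k +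
        s * ((x.2.1 j k - y.2.1 j k) * (Real.log (y.2.1 j k) - Real.log (x.2.1 j k))))) 0 := by
    refine HasDerivAt.fun_sum fun j _ => HasDerivAt.fun_sum fun k _ => ?_
    exact aux_hasDeriv_entry (c.2.1 j k) (x.2.1 j k) (y.2.1 j k) s (hpx.2.1 j k) (hpy.2.1 j k)
  have hD3 : HasDerivAt (fun t : ℝ =>
      (∑ k, (c.2.2 k * (y.2.2 k + t * (x.2.2 k - y.2.2 k)) +
        s * ((y.2.2 k + t * (x.2.2 k - y.2.2 k)) *
          (Real.log ((y.2.2 k + t * (x.2.2 k - y.2.2 k)) / x.2.2 k) - 1)))))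
      (∑ k, ((x.2.2 k - y.2.2 k) * c.2.2 k +
        s * ((x.2.2 k - y.2.2 k) * (Real.log (y.2.2 k) - Real.log (x.2.2 k))))) 0 := by
    refine HasDerivAt.fun_sum fun k _ => ?_
    exact aux_hasDeriv_entry (c.2.2 k) (x.2.2 k) (y.2.2 k) s (hpx.2.2 k) (hpy.2.2 k)
  have hDval : (∑ i, ∑ k, ((x.1 i k - y.1 i k) * c.1 i k +
        s * ((x.1 i k - y.1 i k) * (Real.log (y.1 i k) - Real.log (x.1 i k)))))
      + (∑ j, ∑ k, ((x.2.1 j k - y.2.1 j k) * c.2.1 j k +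
        s * ((x.2.1 j k - y.2.1 j k) * (Real.log (y.2.1 j k) - Real.log (x.2.1 j k)))))
      + (∑ k, ((x.2.2 k - y.2.2 k) * c.2.2 k +
        s * ((x.2.2 k - y.2.2 k) * (Real.log (y.2.2 k) - Real.log (x.2.2 k))))) = D := by
    have split : ∀ (p q : ℕ) (A B : Fin p → Fin q → ℝ),
        (∑ i, ∑ k, (A i k + s * B i k)) = (∑ i, ∑ k, A i k) + s * ∑ i, ∑ k, B i k := by
      intro p q A B
      simp only [Finset.sum_add_distrib]
      congr 1
      simp only [← Finset.mul_sum]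
    have splitv : ∀ (A B : Fin r → ℝ), (∑ k, (A k + s * B k)) = (∑ k, A k) + s * ∑ k, B k := by
      intro A B
      rw [Finset.sum_add_distrib, ← Finset.mul_sum]
    rw [split n r (fun i k => (x.1 i k - y.1 i k) * c.1 i k)
        (fun i k => (x.1 i k - y.1 i k) * (Real.log (y.1 i k) - Real.log (x.1 i k))),
      split m r (fun j k => (x.2.1 j k - y.2.1 j k) * c.2.1 j k)
        (fun j k => (x.2.1 j k - y.2.1 j k) * (Real.log (y.2.1 j k) - Real.log (x.2.1 j k))),
      splitv (fun k => (x.2.2 k - y.2.2 k) * c.2.2 k)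
        (fun k => (x.2.2 k - y.2.2 k) * (Real.log (y.2.2 k) - Real.log (x.2.2 k)))]
    have b1 : (∑ i, ∑ k, (x.1 i k - y.1 i k) * c.1 i k)
        = (∑ i, ∑ k, c.1 i k * x.1 i k) - ∑ i, ∑ k, c.1 i k * y.1 i k := by
      rw [sub_dsum]
      exact Finset.sum_congr rfl fun i _ => Finset.sum_congr rfl fun k _ => by ring
    have b2 : (∑ j, ∑ k, (x.2.1 j k - y.2.1 j k) * c.2.1 j k)
        = (∑ j, ∑ k, c.2.1 j k * x.2.1 j k) - ∑ j, ∑ k, c.2.1 j k * y.2.1 j k := by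
      rw [sub_dsum]
      exact Finset.sum_congr rfl fun j _ => Finset.sum_congr rfl fun k _ => by ring
    have b3 : (∑ k, (x.2.2 k - y.2.2 k) * c.2.2 k)
        = (∑ k, c.2.2 k * x.2.2 k) - ∑ k, c.2.2 k * y.2.2 k := by
      rw [← Finset.sum_sub_distrib]
      exact Finset.sum_congr rfl fun k _ => by ring
    have s1 : (∑ i, ∑ k, (x.1 i k - y.1 i k) * (Real.log (y.1 i k) - Real.log (x.1 i k)))
        = -(∑ i, ∑ k, (x.1 i k - y.1 i k) * (Real.log (x.1 i k) - Real.log (y.1 i k))) := by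
      rw [show (∑ i, ∑ k, (x.1 i k - y.1 i k) * (Real.log (y.1 i k) - Real.log (x.1 i k)))
        = ∑ i, ∑ k, -((x.1 i k - y.1 i k) * (Real.log (x.1 i k) - Real.log (y.1 i k))) from
        Finset.sum_congr rfl fun i _ => Finset.sum_congr rfl fun k _ => by ring]
      simp
    have s2 : (∑ j, ∑ k, (x.2.1 j k - y.2.1 j k) * (Real.log (y.2.1 j k) - Real.log (x.2.1 j k)))
        = -(∑ j, ∑ k, (x.2.1 j k - y.2.1 j k) * (Real.log (x.2.1 j k) - Real.log (y.2.1 j k))) := by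
      rw [show (∑ j, ∑ k, (x.2.1 j k - y.2.1 j k) * (Real.log (y.2.1 j k) - Real.log (x.2.1 j k)))
        = ∑ j, ∑ k, -((x.2.1 j k - y.2.1 j k) * (Real.log (x.2.1 j k) - Real.log (y.2.1 j k))) from
        Finset.sum_congr rfl fun j _ => Finset.sum_congr rfl fun k _ => by ring]
      simp
    have s3 : (∑ k, (x.2.2 k - y.2.2 k) * (Real.log (y.2.2 k) - Real.log (x.2.2 k)))
        = -(∑ k, (x.2.2 k - y.2.2 k) * (Real.log (x.2.2 k) - Real.log (y.2.2 k))) := by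
      rw [show (∑ k, (x.2.2 k - y.2.2 k) * (Real.log (y.2.2 k) - Real.log (x.2.2 k)))
        = ∑ k, -((x.2.2 k - y.2.2 k) * (Real.log (x.2.2 k) - Real.log (y.2.2 k))) from
        Finset.sum_congr rfl fun k _ => by ring]
      simp
    rw [b1, b2, b3, s1, s2, s3, hDdef]
    unfold tripleInner Ssym frobInner
    ring
  -- φ has derivative D at 0
  have hφD : HasDerivAt φ D 0 := by
    rw [hφeq, ← hDval]
    exact (hD1.add hD2).add hD3
  -- φ is minimized at 0 on [0,1]
  have hφmin : ∀ t ∈ Set.Icc (0:ℝ) 1, φ 0 ≤ φ t := by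
    intro t ht
    have hfeas := segT_mem hα hx hy ht.1 ht.2
    have := hmin _ hfeas
    simp only [hφdef]
    rw [segT_zero y x]
    exact this
  -- conclude D ≥ 0
  have hD0 : 0 ≤ D := by
    have hslope : Filter.Tendsto (slope φ 0) (nhdsWithin 0 {(0:ℝ)}ᶜ) (nhds D) :=
      hasDerivAt_iff_tendsto_slope.mp hφD
    have hslope' : Filter.Tendsto (slope φ 0) (nhdsWithin 0 (Set.Ioi 0)) (nhds D) :=
      hslope.mono_left (nhdsWithin_mono 0 (fun t ht => ne_of_gt ht))
    refine ge_of_tendsto hslope' ?_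
    filter_upwards [Ioc_mem_nhdsGT_of_mem (Set.mem_Ico.mpr ⟨le_refl 0, zero_lt_one⟩)] with t ht
    rw [slope_def_field]
    have h1 : φ 0 ≤ φ t := hφmin t ⟨ht.1.le, ht.2⟩
    apply div_nonneg (by linarith) (by linarith [ht.1])
  rw [hDdef] at hD0
  linarith

/-- indicator mass of x on the zero set of y (matrix blocks only) -/
def Wfun (x y : LRTriple n m r) : ℝ :=
  (∑ i, ∑ k, if y.1 i k = 0 then x.1 i k else 0) +
  (∑ j, ∑ k, if y.2.1 j k = 0 then x.2.1 j k else 0)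

lemma block_seg_le {p q : ℕ} (X Y : Fin p → Fin q → ℝ)
    (hX : ∀ i k, 0 < X i k) (hY : ∀ i k, 0 ≤ Y i k) {t : ℝ} (ht : 0 < t) (ht1 : t ≤ 1) :
    (∑ i, ∑ k, (Y i k + t * (X i k - Y i k)) *
        (Real.log ((Y i k + t * (X i k - Y i k)) / X i k) - 1))
    ≤ (∑ i, ∑ k, Y i k * (Real.log (Y i k / X i k) - 1))
      + t * ((∑ i, ∑ k, X i k * (Real.log (X i k / X i k) - 1))
        - ∑ i, ∑ k, Y i k * (Real.log (Y i k / X i k) - 1))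
      + t * Real.log t * (∑ i, ∑ k, if Y i k = 0 then X i k else 0) := by
  have hstep := fun (i : Fin p) (k : Fin q) =>
    aux_entry_convex (X i k) (Y i k) t (hX i k) (hY i k) ht ht1
  calc (∑ i, ∑ k, (Y i k + t * (X i k - Y i k)) *
        (Real.log ((Y i k + t * (X i k - Y i k)) / X i k) - 1))
      ≤ ∑ i, ∑ k, (Y i k * (Real.log (Y i k / X i k) - 1)
          + t * (X i k * (Real.log (X i k / X i k) - 1) - Y i k * (Real.log (Y i k / X i k) - 1))
          + t * Real.log t * (if Y i k = 0 then X i k else 0)) :=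
        Finset.sum_le_sum fun i _ => Finset.sum_le_sum fun k _ => hstep i k
    _ = (∑ i, ∑ k, Y i k * (Real.log (Y i k / X i k) - 1))
        + t * ((∑ i, ∑ k, X i k * (Real.log (X i k / X i k) - 1))
          - ∑ i, ∑ k, Y i k * (Real.log (Y i k / X i k) - 1))
        + t * Real.log t * (∑ i, ∑ k, if Y i k = 0 then X i k else 0) := by
        simp only [Finset.sum_add_distrib, ← Finset.mul_sum]
        rw [← sub_dsum]

lemma vec_seg_le {q : ℕ} (X Y : Fin q → ℝ)
    (hX : ∀ k, 0 < X k) (hY : ∀ k, 0 < Y k) {t : ℝ} (ht : 0 < t) (ht1 : t ≤ 1) :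
    (∑ k, (Y k + t * (X k - Y k)) * (Real.log ((Y k + t * (X k - Y k)) / X k) - 1))
    ≤ (∑ k, Y k * (Real.log (Y k / X k) - 1))
      + t * ((∑ k, X k * (Real.log (X k / X k) - 1)) - ∑ k, Y k * (Real.log (Y k / X k) - 1)) := by
  have hstep : ∀ k, (Y k + t * (X k - Y k)) * (Real.log ((Y k + t * (X k - Y k)) / X k) - 1)
      ≤ Y k * (Real.log (Y k / X k) - 1)
        + t * (X k * (Real.log (X k / X k) - 1) - Y k * (Real.log (Y k / X k) - 1)) := by
    intro k
    have := aux_entry_convex (X k) (Y k) t (hX k) (hY k).le ht ht1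
    rw [if_neg (hY k).ne'] at this
    simpa using this
  calc (∑ k, (Y k + t * (X k - Y k)) * (Real.log ((Y k + t * (X k - Y k)) / X k) - 1))
      ≤ ∑ k, (Y k * (Real.log (Y k / X k) - 1)
          + t * (X k * (Real.log (X k / X k) - 1) - Y k * (Real.log (Y k / X k) - 1))) :=
        Finset.sum_le_sum fun k _ => hstep k
    _ = (∑ k, Y k * (Real.log (Y k / X k) - 1))
        + t * ((∑ k, X k * (Real.log (X k / X k) - 1)) - ∑ k, Y k * (Real.log (Y k / X k) - 1)) := by
        rw [Finset.sum_add_distrib, ← Finset.mul_sum, ← Finset.sum_sub_distrib]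

lemma tripleKL_seg_le {x y : LRTriple n m r} (hpx : PosT x)
    (hy1 : ∀ i k, 0 ≤ y.1 i k) (hy2 : ∀ j k, 0 ≤ y.2.1 j k) (hy3 : ∀ k, 0 < y.2.2 k)
    {t : ℝ} (ht : 0 < t) (ht1 : t ≤ 1) :
    tripleKL (segT y x t) x ≤ tripleKL y x + t * (tripleKL x x - tripleKL y x)
      + t * Real.log t * Wfun x y := by
  unfold tripleKL matKL vecKL Wfun segT
  simp only [Matrix.of_apply]
  have h1 := block_seg_le (fun i k => x.1 i k) (fun i k => y.1 i k) hpx.1 hy1 ht ht1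
  have h2 := block_seg_le (fun j k => x.2.1 j k) (fun j k => y.2.1 j k) hpx.2.1 hy2 ht ht1
  have h3 := vec_seg_le (fun k => x.2.2 k) (fun k => y.2.2 k) hpx.2.2 hy3 ht ht1
  linarith

/-- the prox minimizer has strictly positive entries -/
lemma minimizer_pos {a : Fin n → ℝ} {b : Fin m → ℝ} {α : ℝ} (hα : 0 < α)
    (c : LRTriple n m r) {x y : LRTriple n m r} {s : ℝ} (hs : 0 < s)
    (hx : x ∈ CsetAlpha a b r α) (hy : y ∈ CsetAlpha a b r α) (hpx : PosT x)
    (hmin : ∀ ζ ∈ CsetAlpha a b r α,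
      tripleInner c y + s * tripleKL y x ≤ tripleInner c ζ + s * tripleKL ζ x) :
    PosT y := by
  have hy1 : ∀ i k, 0 ≤ y.1 i k := hy.1.1
  have hy2 : ∀ j k, 0 ≤ y.2.1 j k := hy.1.2.1
  have hy3 : ∀ k, 0 < y.2.2 k := fun k => lt_of_lt_of_le hα (hy.1.2.2.1 k)
  -- main claim : Wfun x y = 0
  have hW0 : 0 ≤ Wfun x y := by
    unfold Wfun
    have w1 : (0:ℝ) ≤ ∑ i, ∑ k, if y.1 i k = 0 then x.1 i k else 0 :=
      Finset.sum_nonneg fun i _ => Finset.sum_nonneg fun k _ => by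
        split
        · exact (hpx.1 i k).le
        · exact le_refl 0
    have w2 : (0:ℝ) ≤ ∑ j, ∑ k, if y.2.1 j k = 0 then x.2.1 j k else 0 :=
      Finset.sum_nonneg fun j _ => Finset.sum_nonneg fun k _ => by
        split
        · exact (hpx.2.1 j k).le
        · exact le_refl 0
    linarith
  have hWz : Wfun x y = 0 := by
    by_contra hne
    have hWpos : 0 < Wfun x y := lt_of_le_of_ne hW0 (Ne.symm hne)
    set W := Wfun x y with hWdef
    set M : ℝ := (tripleInner c x - tripleInner c y) + s * (tripleKL x x - tripleKL y x)
      with hMdef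
    set t : ℝ := Real.exp (-(|M| / (s * W) + 1)) with htdef
    have ht : 0 < t := Real.exp_pos _
    have ht1 : t ≤ 1 := by
      rw [htdef]
      calc Real.exp (-(|M| / (s * W) + 1)) ≤ Real.exp 0 := by
            apply Real.exp_le_exp.mpr
            have : 0 ≤ |M| / (s * W) := by positivity
            linarith
        _ = 1 := Real.exp_zero
    have hlogt : Real.log t = -(|M| / (s * W) + 1) := by
      rw [htdef, Real.log_exp]
    have hfeas := segT_mem hα hx hy ht.le ht1
    have hlow := hmin _ hfeas
    have hup : tripleInner c (segT y x t) + s * tripleKL (segT y x t) x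
        ≤ (tripleInner c y + s * tripleKL y x) + t * M + s * (t * Real.log t) * W := by
      have hi := tripleInner_seg c x y t
      have hk := tripleKL_seg_le hpx hy1 hy2 hy3 ht ht1
      have := mul_le_mul_of_nonneg_left hk hs.le
      rw [hMdef]
      nlinarith [this, hi]
    have hcomb : 0 ≤ t * M + s * (t * Real.log t) * W := by linarith
    have hval : t * M + s * (t * Real.log t) * W = t * (M + s * Real.log t * W) := by ring
    have hMW : M + s * Real.log t * W < 0 := by
      rw [hlogt]
      have hsW : 0 < s * W := mul_pos hs hWpos
      have hexp : s * (-(|M| / (s * W) + 1)) * W = -|M| - s * W := by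
        field_simp
        ring
      rw [hexp]
      have : M ≤ |M| := le_abs_self M
      linarith
    nlinarith [hcomb, hval, hMW, ht]
  -- deduce positivity of matrix entries
  have hb1 : ∀ i k, 0 < y.1 i k := by
    intro i k
    rcases eq_or_lt_of_le (hy1 i k) with h0 | h
    · exfalso
      have hW1 : x.1 i k ≤ Wfun x y := by
        unfold Wfun
        have hle1 : x.1 i k ≤ ∑ i', ∑ k', if y.1 i' k' = 0 then x.1 i' k' else 0 := by
          have hik : (if y.1 i k = 0 then x.1 i k else 0) = x.1 i k := if_pos h0.symm
          calc x.1 i k = if y.1 i k = 0 then x.1 i k else 0 := hik.symm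
            _ ≤ ∑ k', if y.1 i k' = 0 then x.1 i k' else 0 := by
                refine Finset.single_le_sum (f := fun k' => if y.1 i k' = 0 then x.1 i k' else 0)
                  (fun k' _ => ?_) (Finset.mem_univ k)
                split
                · exact (hpx.1 i k').le
                · exact le_refl 0
            _ ≤ ∑ i', ∑ k', if y.1 i' k' = 0 then x.1 i' k' else 0 := by
                refine Finset.single_le_sum
                  (f := fun i' => ∑ k', if y.1 i' k' = 0 then x.1 i' k' else 0)
                  (fun i' _ => ?_) (Finset.mem_univ i)
                exact Finset.sum_nonneg fun k' _ => by
                  split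
                  · exact (hpx.1 i' k').le
                  · exact le_refl 0
        have hle2 : (0:ℝ) ≤ ∑ j, ∑ k', if y.2.1 j k' = 0 then x.2.1 j k' else 0 :=
          Finset.sum_nonneg fun j _ => Finset.sum_nonneg fun k' _ => by
            split
            · exact (hpx.2.1 j k').le
            · exact le_refl 0
        linarith
      rw [hWz] at hW1
      exact absurd hW1 (not_le.mpr (hpx.1 i k))
    · exact h
  have hb2 : ∀ j k, 0 < y.2.1 j k := by
    intro j k
    rcases eq_or_lt_of_le (hy2 j k) with h0 | h
    · exfalso
      have hW1 : x.2.1 j k ≤ Wfun x y := by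
        unfold Wfun
        have hle1 : x.2.1 j k ≤ ∑ j', ∑ k', if y.2.1 j' k' = 0 then x.2.1 j' k' else 0 := by
          have hjk : (if y.2.1 j k = 0 then x.2.1 j k else 0) = x.2.1 j k := if_pos h0.symm
          calc x.2.1 j k = if y.2.1 j k = 0 then x.2.1 j k else 0 := hjk.symm
            _ ≤ ∑ k', if y.2.1 j k' = 0 then x.2.1 j k' else 0 := by
                refine Finset.single_le_sum (f := fun k' => if y.2.1 j k' = 0 then x.2.1 j k' else 0)
                  (fun k' _ => ?_) (Finset.mem_univ k)
                split
                · exact (hpx.2.1 j k').le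
                · exact le_refl 0
            _ ≤ ∑ j', ∑ k', if y.2.1 j' k' = 0 then x.2.1 j' k' else 0 := by
                refine Finset.single_le_sum
                  (f := fun j' => ∑ k', if y.2.1 j' k' = 0 then x.2.1 j' k' else 0)
                  (fun j' _ => ?_) (Finset.mem_univ j)
                exact Finset.sum_nonneg fun k' _ => by
                  split
                  · exact (hpx.2.1 j' k').le
                  · exact le_refl 0
        have hle2 : (0:ℝ) ≤ ∑ i, ∑ k', if y.1 i k' = 0 then x.1 i k' else 0 :=
          Finset.sum_nonneg fun i _ => Finset.sum_nonneg fun k' _ => by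
            split
            · exact (hpx.1 i k').le
            · exact le_refl 0
        linarith
      rw [hWz] at hW1
      exact absurd hW1 (not_le.mpr (hpx.2.1 j k))
    · exact h
  exact ⟨hb1, hb2, hy3⟩

/-- uniform lower bound for Fobj on the constraint set -/
lemma Fobj_lb (C : Mat n m) {a : Fin n → ℝ} {b : Fin m → ℝ} {α ε : ℝ}
    (ha : a ∈ posSimplex n) (hb : b ∈ posSimplex m) (hα : 0 < α) (hε : 0 ≤ ε)
    {x : LRTriple n m r} (hx : x ∈ CsetAlpha a b r α) :
    -(specNorm C * r) - ε * (n * r + m * r + r) ≤ Fobj C ε x := by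
  obtain ⟨hxQ0, hxR0, hxgα, hxQc, hxRc, hxQ1, hxR1, hxg1⟩ := mem_bounds ha hb hx
  have hσ : 0 ≤ specNorm C := specNorm_nonneg C
  have hg0 : ∀ k, (0:ℝ) < x.2.2 k := fun k => lt_of_lt_of_le hα (hxgα k)
  rw [Fobj_expand]
  have hT : -(specNorm C * r) ≤ ∑ k, colA C x.1 x.2.1 k * (x.2.2 k)⁻¹ := by
    have hAk : ∀ k, |colA C x.1 x.2.1 k| ≤ specNorm C * (x.2.2 k * x.2.2 k) := by
      intro k
      refine le_trans (aux_cs_bound C _ _) ?_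
      gcongr <;> first
        | exact Real.sqrt_nonneg _
        | exact le_trans hα.le (hxgα k)
        | (rw [← hxQc k]; exact aux_l2_le_l1 _ (fun i => hxQ0 i k))
        | (rw [← hxRc k]; exact aux_l2_le_l1 _ (fun j => hxR0 j k))
    have hterm : ∀ k, -specNorm C ≤ colA C x.1 x.2.1 k * (x.2.2 k)⁻¹ := by
      intro k
      have h1 : -(specNorm C * (x.2.2 k * x.2.2 k)) ≤ colA C x.1 x.2.1 k :=
        neg_le_of_abs_le (hAk k)
      have h2 := mul_le_mul_of_nonneg_right h1 (inv_nonneg.mpr (hg0 k).le)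
      have h3 : -(specNorm C * (x.2.2 k * x.2.2 k)) * (x.2.2 k)⁻¹
          = -(specNorm C * x.2.2 k) := by
        field_simp [(hg0 k).ne']
      rw [h3] at h2
      have h4 : -specNorm C ≤ -(specNorm C * x.2.2 k) := by
        have := mul_le_mul_of_nonneg_left (hxg1 k) hσ
        simp only [mul_one] at this
        linarith
      linarith
    calc -(specNorm C * (r:ℝ)) = ∑ _k : Fin r, -specNorm C := by
          rw [Finset.sum_const, Finset.card_univ, Fintype.card_fin, nsmul_eq_mul]
          ring
      _ ≤ ∑ k, colA C x.1 x.2.1 k * (x.2.2 k)⁻¹ := Finset.sum_le_sum fun k _ => hterm k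
  have hE : -((n:ℝ) * r + m * r + r) ≤ EntS x := by
    unfold EntS
    have he : ∀ t : ℝ, 0 ≤ t → -1 ≤ t * (Real.log t - 1) := by
      intro t ht
      have := aux_mul_log_ge t ht
      nlinarith
    have e1 : -((n:ℝ) * r) ≤ ∑ i, ∑ k, x.1 i k * (Real.log (x.1 i k) - 1) := by
      calc -((n:ℝ) * r) = ∑ _i : Fin n, ∑ _k : Fin r, (-1 : ℝ) := by
            simp [Finset.sum_const, Finset.card_univ, mul_comm]
        _ ≤ _ := Finset.sum_le_sum fun i _ => Finset.sum_le_sum fun k _ =>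
            he _ (hxQ0 i k)
    have e2 : -((m:ℝ) * r) ≤ ∑ j, ∑ k, x.2.1 j k * (Real.log (x.2.1 j k) - 1) := by
      calc -((m:ℝ) * r) = ∑ _j : Fin m, ∑ _k : Fin r, (-1 : ℝ) := by
            simp [Finset.sum_const, Finset.card_univ, mul_comm]
        _ ≤ _ := Finset.sum_le_sum fun j _ => Finset.sum_le_sum fun k _ =>
            he _ (hxR0 j k)
    have e3 : -(r:ℝ) ≤ ∑ k, x.2.2 k * (Real.log (x.2.2 k) - 1) := by
      calc -(r:ℝ) = ∑ _k : Fin r, (-1 : ℝ) := by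
            simp [Finset.sum_const, Finset.card_univ]
        _ ≤ _ := Finset.sum_le_sum fun k _ => he _ (hg0 k).le
    linarith
  have := mul_le_mul_of_nonneg_left hE hε
  nlinarith [this, hT]

/-- the step size constant dominates `ε + 3σ/α` -/
lemma L_bound (σ ε α : ℝ) (hσ : 0 ≤ σ) (hε : 0 ≤ ε) (hα : 0 < α) (hα1 : α ≤ 1) :
    ε + 3 * σ / α ≤ Real.sqrt (3 * (2 * σ ^ 2 / α ^ 4 + ((ε + 2 * σ) / α ^ 3) ^ 2)) := by
  rw [Real.le_sqrt (by positivity) (by positivity)]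
  have hα2 : α ^ 2 ≤ 1 := by nlinarith
  have hα3 : α ^ 3 ≤ 1 := by nlinarith
  have hmono : α ^ 3 * ε + 3 * σ * α ^ 2 ≤ ε + 3 * σ := by nlinarith
  have hkey : (α ^ 3 * ε + 3 * σ * α ^ 2) ^ 2 ≤ 3 * (ε + 2 * σ) ^ 2 := by
    have h1 : (α ^ 3 * ε + 3 * σ * α ^ 2) ^ 2 ≤ (ε + 3 * σ) ^ 2 := by
      have h0 : 0 ≤ α ^ 3 * ε + 3 * σ * α ^ 2 := by positivity
      nlinarith
    nlinarith
  have he : (ε + 3 * σ / α) ^ 2 = (α ^ 3 * ε + 3 * σ * α ^ 2) ^ 2 / α ^ 6 := by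
    field_simp
  have he2 : ((ε + 2 * σ) / α ^ 3) ^ 2 = (ε + 2 * σ) ^ 2 / α ^ 6 := by
    rw [div_pow]
    congr 1
    ring
  rw [he, he2]
  have hstep : (α ^ 3 * ε + 3 * σ * α ^ 2) ^ 2 / α ^ 6 ≤ 3 * (ε + 2 * σ) ^ 2 / α ^ 6 := by
    gcongr
  have hpos : 0 ≤ 2 * σ ^ 2 / α ^ 4 := by positivity
  calc (α ^ 3 * ε + 3 * σ * α ^ 2) ^ 2 / α ^ 6 ≤ 3 * (ε + 2 * σ) ^ 2 / α ^ 6 := hstep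
    _ = 3 * ((ε + 2 * σ) ^ 2 / α ^ 6) := by ring
    _ ≤ 3 * (2 * σ ^ 2 / α ^ 4 + (ε + 2 * σ) ^ 2 / α ^ 6) := by linarith

end MDAux


/-- Non-asymptotic stationary convergence of the mirror-descent scheme
for `F_ε` on `𝒞(a,b,r,α)` with constant step `γ = 1/(2 L_{ε,α})`:
`min_{0 ≤ k ≤ N−1} Δ_{ε,α}(ξ_k, γ) ≤ 4 L_{ε,α} D₀ / N`. -/
theorem mirror_descent_LOT_convergence {n m : ℕ} (r : ℕ) (hr : 1 ≤ r)
    (a : Fin n → ℝ) (ha : a ∈ posSimplex n)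
    (b : Fin m → ℝ) (hb : b ∈ posSimplex m)
    (C : Mat n m) (ε : ℝ) (hε : 0 ≤ ε)
    (α : ℝ) (hα : 0 < α) (hα' : α ≤ 1 / (r : ℝ))
    (N : ℕ) (hN : 1 ≤ N)
    (L γ : ℝ)
    (hL : L = Real.sqrt (3 * (2 * specNorm C ^ 2 / α ^ 4 +
      ((ε + 2 * specNorm C) / α ^ 3) ^ 2)))
    (hγ : γ = 1 / (2 * L))
    (ξ : ℕ → LRTriple n m r)
    (h₀ : ξ 0 ∈ CsetAlpha a b r α)
    (hpos₀ : (∀ i j, 0 < (ξ 0).1 i j) ∧ (∀ i j, 0 < (ξ 0).2.1 i j) ∧ ∀ i, 0 < (ξ 0).2.2 i)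
    (hiter : ∀ k : ℕ, ξ (k + 1) ∈ CsetAlpha a b r α ∧
      ∀ ζ ∈ CsetAlpha a b r α,
        tripleInner (gradF C ε (ξ k)) (ξ (k + 1)) + (1 / γ) * tripleKL (ξ (k + 1)) (ξ k) ≤
          tripleInner (gradF C ε (ξ k)) ζ + (1 / γ) * tripleKL ζ (ξ k))
    (D₀ : ℝ) (hD₀ : D₀ = Fobj C ε (ξ 0) - LOTreAlpha a b C ε r α) :
    ∃ k < N, (1 / γ ^ 2) * (tripleKL (ξ k) (ξ (k + 1)) + tripleKL (ξ (k + 1)) (ξ k)) ≤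
      4 * L * D₀ / N := by
  have hσ : 0 ≤ specNorm C := specNorm_nonneg C
  have hLnn : 0 ≤ L := hL ▸ Real.sqrt_nonneg _
  rcases eq_or_lt_of_le hLnn with hL0 | hLpos
  · -- degenerate case L = 0
    refine ⟨0, hN, ?_⟩
    have hγ0 : γ = 0 := by rw [hγ, ← hL0]; norm_num
    rw [hγ0, ← hL0]
    norm_num
  · -- main case L > 0
    have hα1 : α ≤ 1 := by
      have hr1 : (1:ℝ) ≤ (r:ℝ) := by exact_mod_cast hr
      have : (1:ℝ) / (r:ℝ) ≤ 1 := by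
        rw [div_le_one (by linarith)]
        exact hr1
      linarith [hα']
    have hLg : ε + 3 * specNorm C / α ≤ L := by
      rw [hL]
      exact L_bound (specNorm C) ε α hσ hε hα hα1
    have h1γ : 1 / γ = 2 * L := by
      rw [hγ, one_div_one_div]
    have hγ2 : 1 / γ ^ 2 = 4 * L ^ 2 := by
      rw [hγ]
      field_simp
      ring
    have hs : (0:ℝ) < 1 / γ := by rw [h1γ]; linarith
    -- membership and positivity of all iterates
    have hmem : ∀ k, ξ k ∈ CsetAlpha a b r α := by
      intro k
      cases k with
      | zero => exact h₀
      | succ k => exact (hiter k).1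
    have hpos : ∀ k, PosT (ξ k) := by
      intro k
      induction k with
      | zero => exact ⟨hpos₀.1, hpos₀.2.1, hpos₀.2.2⟩
      | succ k ih =>
        exact minimizer_pos hα (gradF C ε (ξ k)) hs (hmem k) (hmem (k + 1)) ih (hiter k).2
    -- per-step descent inequality
    have hstep : ∀ k, (1 / γ ^ 2) * (tripleKL (ξ k) (ξ (k + 1)) + tripleKL (ξ (k + 1)) (ξ k))
        ≤ 4 * L * (Fobj C ε (ξ k) - Fobj C ε (ξ (k + 1))) := by
      intro k
      have hvi := vi_key hα (gradF C ε (ξ k)) (hmem k) (hmem (k + 1)) (hpos k) (hpos (k + 1))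
        (hiter k).2
      rw [h1γ] at hvi
      have hkl := klsum_le_Ssym (hpos k) (hpos (k + 1))
      have hsym := Ssym_eq_Breg (hpos k) (hpos (k + 1))
      have hbyx := Breg_nonneg (hpos k) (hpos (k + 1))
      have hbxy := Breg_nonneg (hpos (k + 1)) (hpos k)
      have hsm := Fobj_smooth C ha hb hα hε hLg (hmem k) (hmem (k + 1)) (hpos k) (hpos (k + 1))
      set S := Ssym (ξ k) (ξ (k + 1)) with hS
      set K := tripleKL (ξ k) (ξ (k + 1)) + tripleKL (ξ (k + 1)) (ξ k) with hK
      set B := Breg (ξ (k + 1)) (ξ k) with hB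
      set B' := Breg (ξ k) (ξ (k + 1)) with hB'
      -- L * K ≤ F k - F (k+1)
      have c1 : L * K ≤ L * S := mul_le_mul_of_nonneg_left hkl hLnn
      have c2 : L * S ≤ Fobj C ε (ξ k) - Fobj C ε (ξ (k + 1)) := by
        have hSBB : S = B + B' := hsym
        nlinarith [hvi, hsm, mul_nonneg hLnn hbxy, mul_nonneg hLnn hbyx]
      calc (1 / γ ^ 2) * K = 4 * L * (L * K) := by rw [hγ2]; ring
        _ ≤ 4 * L * (Fobj C ε (ξ k) - Fobj C ε (ξ (k + 1))) := by
            apply mul_le_mul_of_nonneg_left (le_trans c1 c2) (by linarith)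
    -- the infimum is below the last iterate
    have hbdd : BddBelow (Fobj C ε '' CsetAlpha a b r α) := by
      refine ⟨-(specNorm C * r) - ε * (n * r + m * r + r), ?_⟩
      rintro v ⟨z, hz, rfl⟩
      exact Fobj_lb C ha hb hα hε hz
    have hInf : LOTreAlpha a b C ε r α ≤ Fobj C ε (ξ N) := by
      unfold LOTreAlpha
      exact csInf_le hbdd ⟨ξ N, hmem N, rfl⟩
    -- telescoping
    have hsum : ∑ k ∈ Finset.range N,
        ((1 / γ ^ 2) * (tripleKL (ξ k) (ξ (k + 1)) + tripleKL (ξ (k + 1)) (ξ k)))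
        ≤ 4 * L * D₀ := by
      calc ∑ k ∈ Finset.range N,
            ((1 / γ ^ 2) * (tripleKL (ξ k) (ξ (k + 1)) + tripleKL (ξ (k + 1)) (ξ k)))
          ≤ ∑ k ∈ Finset.range N, (4 * L * (Fobj C ε (ξ k) - Fobj C ε (ξ (k + 1)))) :=
            Finset.sum_le_sum fun k _ => hstep k
        _ = 4 * L * ∑ k ∈ Finset.range N, (Fobj C ε (ξ k) - Fobj C ε (ξ (k + 1))) := by
            rw [Finset.mul_sum]
        _ = 4 * L * (Fobj C ε (ξ 0) - Fobj C ε (ξ N)) := by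
            rw [Finset.sum_range_sub' (fun k => Fobj C ε (ξ k)) N]
        _ ≤ 4 * L * D₀ := by
            apply mul_le_mul_of_nonneg_left _ (by linarith)
            rw [hD₀]
            linarith
    -- extract the minimum
    by_contra hcon
    push_neg at hcon
    have hNpos : (0:ℝ) < N := by exact_mod_cast hN
    have hlt : (N:ℝ) * (4 * L * D₀ / N) < ∑ k ∈ Finset.range N,
        ((1 / γ ^ 2) * (tripleKL (ξ k) (ξ (k + 1)) + tripleKL (ξ (k + 1)) (ξ k))) := by
      calc (N:ℝ) * (4 * L * D₀ / N)
          = ∑ _k ∈ Finset.range N, (4 * L * D₀ / N) := by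
            rw [Finset.sum_const, Finset.card_range, nsmul_eq_mul]
        _ < _ := Finset.sum_lt_sum_of_nonempty
            (Finset.nonempty_range_iff.mpr (by omega))
            (fun k hk => hcon k (Finset.mem_range.mp hk))
    have heq : (N:ℝ) * (4 * L * D₀ / N) = 4 * L * D₀ := by
      field_simp
    rw [heq] at hlt
    linarith
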